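/- arXiv:1212.5401 — 7 statements merged into one kernel-verified Lean document; each statement's English description precedes it below -/
import Mathlib

section
/- For a geometric random variable N_p on {1,2,...} with parameter p ∈ (0,1) (i.e. P(N_p = k) = p(1-p)^{k-1}), the expectation E[1/√N_p] satisfies √p ≤ E[1/√N_p] ≤ 2√p/(1+√p). -/
open Real

noncomputable def cb (n : ℕ) : ℝ := (2 * n).choose n / 4 ^ n

lemma cb_zero : cb 0 = 1 := by simp [cb]

lemma cb_pos (n : ℕ) : 0 < cb n := by
  apply div_pos
  · exact_mod_cast Nat.choose_pos (by omega)
  · positivity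



lemma cb_succ (n : ℕ) : ((n : ℝ) + 1) * cb (n + 1) = ((n : ℝ) + 1/2) * cb n := by
  have h := Nat.succ_mul_centralBinom_succ n
  have h' : ((n : ℝ) + 1) * ((2 * (n + 1)).choose (n + 1)) =
      2 * (2 * (n : ℝ) + 1) * ((2 * n).choose n) := by
    rw [← Nat.centralBinom_eq_two_mul_choose, ← Nat.centralBinom_eq_two_mul_choose]
    exact_mod_cast h
  unfold cb
  have h4 : (4:ℝ) ^ (n+1) = 4 * 4 ^ n := by ring
  rw [h4]
  have : (0:ℝ) < 4 ^ n := by positivity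
  field_simp
  nlinarith [h']



noncomputable def Af (m : ℕ) : ℝ := ∑ ij ∈ Finset.HasAntidiagonal.antidiagonal m, cb ij.1 * cb ij.2
noncomputable def Bf (m : ℕ) : ℝ := ∑ ij ∈ Finset.HasAntidiagonal.antidiagonal m, (ij.1 : ℝ) * (cb ij.1 * cb ij.2)

lemma hsym (m : ℕ) : Bf m + Bf m = m * Af m := by
  have hswap : Bf m = ∑ ij ∈ Finset.HasAntidiagonal.antidiagonal m, (ij.2 : ℝ) * (cb ij.2 * cb ij.1) := by
    rw [Bf]
    simpa using Finset.Nat.sum_antidiagonal_swap (f := fun p => (p.2 : ℝ) * (cb p.2 * cb p.1))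
  nth_rewrite 2 [hswap]
  rw [Af, Bf, ← Finset.sum_add_distrib, Finset.mul_sum]
  apply Finset.sum_congr rfl
  intro ij hij
  have h := (Finset.HasAntidiagonal.mem_antidiagonal).1 hij
  have hc : (ij.1 : ℝ) + ij.2 = m := by exact_mod_cast congrArg Nat.cast h
  linear_combination (cb ij.1 * cb ij.2) * hc

lemma hBstep (n : ℕ) : Bf (n + 1) = Bf n + (1/2) * Af n := by
  rw [Bf, Finset.Nat.sum_antidiagonal_eq_sum_range_succ_mk, Finset.sum_range_succ']
  simp only [Nat.cast_zero, zero_mul, add_zero]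
  rw [Bf, Af, Finset.Nat.sum_antidiagonal_eq_sum_range_succ_mk,
    Finset.Nat.sum_antidiagonal_eq_sum_range_succ_mk, Finset.mul_sum, ← Finset.sum_add_distrib]
  apply Finset.sum_congr rfl
  intro j hj
  have hsub : n + 1 - (j + 1) = n - j := by omega
  rw [hsub]
  push_cast
  linear_combination (cb (n - j)) * cb_succ j

lemma cb_conv (n : ℕ) : Af n = 1 := by
  induction n with
  | zero => simp [Af, cb]
  | succ n ih =>
    have h1 : ((n : ℝ) + 1) * Af (n + 1) = ((n : ℝ) + 1) * Af n := by
      have e1 := hsym (n + 1)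
      have e2 := hsym n
      have e3 := hBstep n
      push_cast at e1
      linarith
    have hne : ((n : ℝ) + 1) ≠ 0 := by positivity
    rw [mul_left_cancel₀ hne h1, ih]

lemma cb_conv' (n : ℕ) : ∑ ij ∈ Finset.HasAntidiagonal.antidiagonal n, cb ij.1 * cb ij.2 = 1 := by
  simpa [Af] using cb_conv n



lemma cb_succ' (n : ℕ) : cb (n + 1) = ((n : ℝ) + 1/2) / ((n : ℝ) + 1) * cb n := by
  have h := cb_succ n
  field_simp
  linarith

lemma cb_sq_le (n : ℕ) : cb n ^ 2 * ((n : ℝ) + 1) ≤ 1 := by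
  induction n with
  | zero => simp [cb]
  | succ n ih =>
    rw [cb_succ' n]
    have h1 : (0:ℝ) < (n:ℝ) + 1 := by positivity
    have h2 : (0:ℝ) ≤ cb n ^ 2 := sq_nonneg _
    push_cast
    have key : (((n:ℝ) + 1/2) / ((n:ℝ) + 1)) ^ 2 * ((n:ℝ) + 1 + 1) ≤ (n:ℝ) + 1 := by
      rw [div_pow, div_mul_eq_mul_div, div_le_iff₀ (by positivity)]
      nlinarith
    calc (((n:ℝ) + 1/2) / ((n:ℝ) + 1) * cb n) ^ 2 * ((n:ℝ) + 1 + 1)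
        = cb n ^ 2 * ((((n:ℝ) + 1/2) / ((n:ℝ) + 1)) ^ 2 * ((n:ℝ) + 1 + 1)) := by ring
      _ ≤ cb n ^ 2 * ((n:ℝ) + 1) := by
          exact mul_le_mul_of_nonneg_left key h2
      _ ≤ 1 := ih

lemma cb_sq_ge (n : ℕ) : 1 ≤ cb (n + 1) ^ 2 * (4 * ((n : ℝ) + 1)) := by
  induction n with
  | zero =>
    have : cb 1 = 1/2 := by norm_num [cb]
    rw [this]; norm_num
  | succ n ih =>
    rw [cb_succ' (n + 1)]
    have h2 : (0:ℝ) ≤ cb (n+1) ^ 2 := sq_nonneg _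
    push_cast
    have key : ((n:ℝ) + 1) ≤ (((n:ℝ) + 1 + 1/2) / ((n:ℝ) + 1 + 1)) ^ 2 * ((n:ℝ) + 1 + 1) := by
      rw [div_pow, div_mul_eq_mul_div, le_div_iff₀ (by positivity)]
      nlinarith
    calc (1:ℝ) ≤ cb (n+1) ^ 2 * (4 * ((n:ℝ) + 1)) := ih
      _ ≤ cb (n+1) ^ 2 * (4 * ((((n:ℝ) + 1 + 1/2) / ((n:ℝ) + 1 + 1)) ^ 2 * ((n:ℝ) + 1 + 1))) := by
          apply mul_le_mul_of_nonneg_left _ h2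
          nlinarith [key]
      _ = (((n:ℝ) + 1 + 1/2) / ((n:ℝ) + 1 + 1) * cb (n+1)) ^ 2 * (4 * ((n:ℝ) + 1 + 1)) := by ring

lemma cb_le_inv_sqrt (n : ℕ) : cb n ≤ 1 / Real.sqrt ((n : ℝ) + 1) := by
  have h1 : (0:ℝ) < (n:ℝ) + 1 := by positivity
  have h := cb_sq_le n
  have h2 : cb n ^ 2 ≤ 1 / ((n:ℝ) + 1) := by
    rw [le_div_iff₀ h1]; linarith
  calc cb n = Real.sqrt (cb n ^ 2) := (Real.sqrt_sq (cb_pos n).le).symm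
    _ ≤ Real.sqrt (1 / ((n:ℝ) + 1)) := Real.sqrt_le_sqrt h2
    _ = 1 / Real.sqrt ((n:ℝ) + 1) := by
        rw [one_div, one_div, Real.sqrt_inv]
  
lemma inv_sqrt_le_cb (n : ℕ) : 1 / Real.sqrt ((n : ℝ) + 1) ≤ 2 * cb (n + 1) := by
  have h1 : (0:ℝ) < (n:ℝ) + 1 := by positivity
  have h := cb_sq_ge n
  have h2 : 1 / ((n:ℝ) + 1) ≤ (2 * cb (n+1)) ^ 2 := by
    rw [div_le_iff₀ h1]; nlinarith
  calc 1 / Real.sqrt ((n:ℝ) + 1) = Real.sqrt (1 / ((n:ℝ) + 1)) := by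
        rw [one_div, one_div, Real.sqrt_inv]
    _ ≤ Real.sqrt ((2 * cb (n+1)) ^ 2) := Real.sqrt_le_sqrt h2
    _ = 2 * cb (n+1) := Real.sqrt_sq (by linarith [cb_pos (n+1)])



lemma cb_le_one (n : ℕ) : cb n ≤ 1 := by
  have h := cb_le_inv_sqrt n
  have h1 : (1:ℝ) ≤ Real.sqrt ((n:ℝ) + 1) := by
    calc (1:ℝ) = Real.sqrt 1 := by simp
      _ ≤ Real.sqrt ((n:ℝ) + 1) :=
        Real.sqrt_le_sqrt (by linarith [(Nat.cast_nonneg n : (0:ℝ) ≤ (n:ℝ))])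
  calc cb n ≤ 1 / Real.sqrt ((n:ℝ) + 1) := h
    _ ≤ 1 / 1 := by
        apply div_le_div_of_nonneg_left (by norm_num) (by norm_num) h1
    _ = 1 := by norm_num

lemma cb_summable {q : ℝ} (hq0 : 0 ≤ q) (hq1 : q < 1) :
    Summable (fun k => cb k * q ^ k) := by
  apply Summable.of_nonneg_of_le
    (fun k => mul_nonneg (cb_pos k).le (pow_nonneg hq0 k))
    (fun k => mul_le_of_le_one_left (pow_nonneg hq0 k) (cb_le_one k))
  exact summable_geometric_of_lt_one hq0 hq1

lemma cb_hasSum {q : ℝ} (hq0 : 0 ≤ q) (hq1 : q < 1) :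
    HasSum (fun k => cb k * q ^ k) (1 / Real.sqrt (1 - q)) := by
  have hs := cb_summable hq0 hq1
  have hnorm : Summable (fun k => ‖cb k * q ^ k‖) := by
    simpa only [Real.norm_eq_abs] using hs.abs
  set S := ∑' k, cb k * q ^ k with hS
  have hsq : S * S = 1 / (1 - q) := by
    rw [hS, tsum_mul_tsum_eq_tsum_sum_antidiagonal_of_summable_norm hnorm hnorm]
    have : ∀ n : ℕ, ∑ ij ∈ Finset.HasAntidiagonal.antidiagonal n, (cb ij.1 * q ^ ij.1) * (cb ij.2 * q ^ ij.2)
        = q ^ n := by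
      intro n
      have : ∑ ij ∈ Finset.HasAntidiagonal.antidiagonal n, (cb ij.1 * q ^ ij.1) * (cb ij.2 * q ^ ij.2)
          = ∑ ij ∈ Finset.HasAntidiagonal.antidiagonal n, (cb ij.1 * cb ij.2) * q ^ n := by
        apply Finset.sum_congr rfl
        intro ij hij
        have h := (Finset.HasAntidiagonal.mem_antidiagonal).1 hij
        rw [← h, pow_add]; ring
      rw [this, ← Finset.sum_mul, cb_conv', one_mul]
    rw [tsum_congr this, tsum_geometric_of_lt_one hq0 hq1, one_div]
  have hS0 : 0 ≤ S := tsum_nonneg (fun k => mul_nonneg (cb_pos k).le (pow_nonneg hq0 k))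
  have hq' : (0:ℝ) < 1 - q := by linarith
  have hSval : S = 1 / Real.sqrt (1 - q) := by
    have h1 : S ^ 2 = 1 / (1 - q) := by rw [sq]; exact hsq
    have : S = Real.sqrt (1 / (1 - q)) := by
      rw [← h1, Real.sqrt_sq hS0]
    rw [this, one_div, one_div, Real.sqrt_inv]
  rw [← hSval]
  exact hs.hasSum


/-- For a geometric random variable `N_p` on `{1,2,...}` with parameter `p ∈ (0,1)`,
`√p ≤ E[1/√N_p] ≤ 2√p/(1+√p)`. -/
theorem stmt_0 (p : ℝ) (hp : 0 < p) (hp1 : p < 1) :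
    Real.sqrt p ≤ ∑' k : ℕ, (1 / Real.sqrt (k + 1)) * (p * (1 - p) ^ k) ∧
    ∑' k : ℕ, (1 / Real.sqrt (k + 1)) * (p * (1 - p) ^ k) ≤
      2 * Real.sqrt p / (1 + Real.sqrt p) := by
  set q : ℝ := 1 - p with hq
  have hq0 : 0 ≤ q := by simp [hq]; linarith
  have hq0' : 0 < q := by simp [hq]; linarith
  have hq1 : q < 1 := by simp [hq]; linarith
  set s : ℝ := Real.sqrt p with hsdef
  have hs0 : 0 < s := Real.sqrt_pos.mpr hp
  have hs1 : s < 1 := by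
    rw [hsdef]
    calc Real.sqrt p < Real.sqrt 1 := Real.sqrt_lt_sqrt hp.le hp1
      _ = 1 := Real.sqrt_one
  have hsp : s ^ 2 = p := Real.sq_sqrt hp.le
  have hone : 1 - q = p := by simp [hq]
  have hS : HasSum (fun k => cb k * q ^ k) (1 / s) := by
    have := cb_hasSum hq0 hq1
    rwa [hone] at this
  -- bounds on sqrt(k+1)
  have hsk : ∀ k : ℕ, (0:ℝ) < Real.sqrt ((k:ℝ) + 1) :=
    fun k => Real.sqrt_pos.mpr (by positivity)
  -- summability of the main series
  have hmain : Summable (fun k : ℕ => (1 / Real.sqrt ((k:ℝ) + 1)) * (p * q ^ k)) := by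
    apply Summable.of_nonneg_of_le
      (fun k => mul_nonneg (by positivity) (by positivity))
      (fun k => ?_)
    · exact (summable_geometric_of_lt_one hq0 hq1).mul_left p
    · have h1 : 1 / Real.sqrt ((k:ℝ) + 1) ≤ 1 := by
        rw [div_le_one (hsk k)]
        calc (1:ℝ) = Real.sqrt 1 := by simp
          _ ≤ Real.sqrt ((k:ℝ) + 1) :=
            Real.sqrt_le_sqrt (by linarith [(Nat.cast_nonneg k : (0:ℝ) ≤ (k:ℝ))])
      exact mul_le_of_le_one_left (by positivity) h1
  constructor
  · -- lower bound
    have hlow : HasSum (fun k => p * (cb k * q ^ k)) (p * (1 / s)) := hS.mul_left p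
    have hval : p * (1 / s) = s := by
      field_simp
      nlinarith [hsp]
    rw [← hval]
    refine hasSum_le (fun k => ?_) hlow hmain.hasSum
    have := cb_le_inv_sqrt k
    have h2 : (0:ℝ) ≤ p * q ^ k := by positivity
    calc p * (cb k * q ^ k) = cb k * (p * q ^ k) := by ring
      _ ≤ (1 / Real.sqrt ((k:ℝ) + 1)) * (p * q ^ k) := mul_le_mul_of_nonneg_right this h2
  · -- upper bound
    have hS1 : HasSum (fun k : ℕ => cb (k + 1) * q ^ (k + 1)) (1 / s - 1) := by
      have h0 : (1 / s - 1) + ∑ i ∈ Finset.range 1, cb i * q ^ i = 1 / s := by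
        simp [cb]
      rw [← h0] at hS
      exact (hasSum_nat_add_iff (f := fun k => cb k * q ^ k) 1).mpr hS
    have hS2 : HasSum (fun k : ℕ => (2 * p / q) * (cb (k + 1) * q ^ (k + 1)))
        ((2 * p / q) * (1 / s - 1)) := hS1.mul_left _
    have hub := hasSum_le (f := fun k : ℕ => (1 / Real.sqrt ((k:ℝ) + 1)) * (p * q ^ k))
      (fun k => ?_) hmain.hasSum hS2
    · calc ∑' k : ℕ, (1 / Real.sqrt ((k:ℝ) + 1)) * (p * q ^ k)
          ≤ (2 * p / q) * (1 / s - 1) := hub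
        _ = 2 * s / (1 + s) := by
            have hps : p = s ^ 2 := hsp.symm
            have hqs : q = (1 - s) * (1 + s) := by rw [hq, hps]; ring
            have h1 : (1:ℝ) - s ≠ 0 := by linarith
            have h2 : (1:ℝ) + s ≠ 0 := by linarith
            rw [hps, hqs]
            field_simp
    · -- termwise
      have h1 := inv_sqrt_le_cb k
      have h2 : (0:ℝ) ≤ p * q ^ k := by positivity
      have hqe : (2 * p / q) * (cb (k + 1) * q ^ (k + 1)) = (2 * cb (k + 1)) * (p * q ^ k) := by
        field_simp
        ring
      rw [hqe]
      exact mul_le_mul_of_nonneg_right h1 h2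
end

section
/- For positive reals σ and τ, the Kolmogorov distance between the centered normal distributions N(0,σ²) and N(0,τ²) is at most min(|1 - τ²/σ²|, |1 - σ²/τ²|). -/
open MeasureTheory ProbabilityTheory Real

noncomputable def Phi (x : ℝ) : ℝ := ((gaussianReal 0 1) (Set.Iic x)).toReal



lemma phi01 (x : ℝ) : gaussianPDFReal 0 1 x = (Real.sqrt (2 * Real.pi))⁻¹ * Real.exp (- x ^ 2 / 2) := by
  simp [gaussianPDFReal]

lemma Phi_mono : Monotone Phi := fun a b hab => by
  have := measure_mono (μ := gaussianReal 0 1) (Set.Iic_subset_Iic.2 hab)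
  exact ENNReal.toReal_mono (measure_ne_top _ _) this

lemma Phi_nonneg (x : ℝ) : 0 ≤ Phi x := ENNReal.toReal_nonneg

lemma Phi_le_one (x : ℝ) : Phi x ≤ 1 := by
  have := prob_le_one (μ := gaussianReal 0 1) (s := Set.Iic x)
  simpa [Phi] using ENNReal.toReal_mono (by simp) this

lemma cdf_eq (σ : ℝ) (hσ : 0 < σ) (z : ℝ) :
    ((gaussianReal 0 ⟨σ ^ 2, sq_nonneg σ⟩) (Set.Iic z)).toReal = Phi (z / σ) := by
  have h := gaussianReal_map_const_mul (μ := 0) (v := 1) σ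
  rw [mul_zero] at h
  have hv : (NNReal.mk (σ ^ 2) (sq_nonneg σ) * 1 : NNReal) = ⟨σ ^ 2, sq_nonneg σ⟩ := mul_one _
  rw [hv] at h
  rw [← h, Measure.map_apply (measurable_const_mul σ) measurableSet_Iic]
  congr 2
  ext x
  simp only [Set.mem_preimage, Set.mem_Iic]
  rw [mul_comm, ← le_div_iff₀ hσ]


lemma Phi_zero : Phi 0 = 1/2 := by
  set μ := gaussianReal 0 1 with hμ
  have h := gaussianReal_map_const_mul (μ := 0) (v := 1) (-1)
  rw [mul_zero] at h
  have hv : (NNReal.mk ((-1:ℝ) ^ 2) (sq_nonneg _) * 1 : NNReal) = 1 := by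
    rw [mul_one]; ext; norm_num [NNReal.mk]; rfl
  rw [hv, ← hμ] at h
  have hmap : μ (Set.Ici 0) = μ (Set.Iic 0) := by
    conv_lhs => rw [← h, Measure.map_apply (measurable_const_mul _) measurableSet_Ici]
    congr 1
    ext x
    simp
  have hz : μ {(0:ℝ)} = 0 := by
    refine gaussianReal_absolutelyContinuous 0 one_ne_zero ?_
    simp
  have hIoi : μ (Set.Ioi 0) = μ (Set.Ici 0) := by
    rw [← Set.Ici_sdiff_left, measure_diff_null hz]
  have hcompl : μ (Set.Ioi 0) = 1 - μ (Set.Iic 0) := by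
    rw [← Set.compl_Iic, measure_compl measurableSet_Iic (measure_ne_top _ _), measure_univ]
  have h2 : μ (Set.Iic 0) = 1 - μ (Set.Iic 0) := by
    conv_lhs => rw [← hmap, ← hIoi]
    exact hcompl
  have hle : μ (Set.Iic 0) ≤ 1 := prob_le_one
  have hfin : μ (Set.Iic 0) ≠ ⊤ := measure_ne_top _ _
  have : (μ (Set.Iic 0)).toReal = 1 - (μ (Set.Iic 0)).toReal := by
    conv_lhs => rw [h2]
    rw [ENNReal.toReal_sub_of_le hle (by simp)]
    simp
  have : (μ (Set.Iic 0)).toReal = 1/2 := by linarith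
  simpa [Phi] using this


lemma Phi_diff {a b : ℝ} (hab : a ≤ b) :
    Phi b - Phi a = ∫ x in Set.Ioc a b, gaussianPDFReal 0 1 x := by
  have hsplit : Set.Iic a ∪ Set.Ioc a b = Set.Iic b := Set.Iic_union_Ioc_eq_Iic hab
  have hdisj : Disjoint (Set.Iic a) (Set.Ioc a b) := by
    simp [Set.disjoint_left]
    intro x hx; intro h; linarith
  have hm : gaussianReal 0 1 (Set.Iic b)
      = gaussianReal 0 1 (Set.Iic a) + gaussianReal 0 1 (Set.Ioc a b) := by
    rw [← hsplit, measure_union hdisj measurableSet_Ioc]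
  have h2 : Phi b = Phi a + (gaussianReal 0 1 (Set.Ioc a b)).toReal := by
    rw [Phi, hm, ENNReal.toReal_add (measure_ne_top _ _) (measure_ne_top _ _)]; rfl
  rw [h2, gaussianReal_apply_eq_integral 0 one_ne_zero,
    ENNReal.toReal_ofReal (setIntegral_nonneg measurableSet_Ioc
      (fun x _ => gaussianPDFReal_nonneg 0 1 x))]
  ring

lemma integral_pdf_le {a b C : ℝ} (hab : a ≤ b)
    (hC : ∀ x ∈ Set.Ioc a b, gaussianPDFReal 0 1 x ≤ C) :
    ∫ x in Set.Ioc a b, gaussianPDFReal 0 1 x ≤ (b - a) * C := by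
  have h1 : ∫ x in Set.Ioc a b, gaussianPDFReal 0 1 x ≤ ∫ _x in Set.Ioc a b, C := by
    refine setIntegral_mono_on ((integrable_gaussianPDFReal 0 1).restrict)
      (integrableOn_const measure_Ioc_lt_top.ne) measurableSet_Ioc hC
  calc _ ≤ ∫ _x in Set.Ioc a b, C := h1
    _ = (b - a) * C := by
        rw [setIntegral_const, measureReal_def, Real.volume_Ioc, smul_eq_mul,
          ENNReal.toReal_ofReal (by linarith)]

lemma pdf_even (x : ℝ) : gaussianPDFReal 0 1 (-x) = gaussianPDFReal 0 1 x := by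
  simp [gaussianPDFReal, neg_sq]

lemma pdf_anti {a x : ℝ} (ha : 0 ≤ a) (hax : a ≤ x) :
    gaussianPDFReal 0 1 x ≤ gaussianPDFReal 0 1 a := by
  simp only [gaussianPDFReal, NNReal.coe_one, mul_one, sub_zero]
  gcongr

lemma mul_pdf_le_one {x : ℝ} (hx : 0 ≤ x) : x * gaussianPDFReal 0 1 x ≤ 1 := by
  simp only [gaussianPDFReal, NNReal.coe_one, mul_one, sub_zero]
  have h2 : x ≤ Real.exp (x ^ 2 / 2) := by
    have := Real.add_one_le_exp (x ^ 2 / 2)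
    nlinarith
  have h1 : x * Real.exp (-x ^ 2 / 2) ≤ 1 := by
    rw [show (-x^2/2 : ℝ) = -(x^2/2) by ring, Real.exp_neg]
    rw [mul_inv_le_iff₀ (Real.exp_pos _), one_mul]
    exact h2
  have hs : (1:ℝ) ≤ Real.sqrt (2 * Real.pi) := by
    rw [show (1:ℝ) = Real.sqrt 1 by simp]
    exact Real.sqrt_le_sqrt (by nlinarith [Real.pi_gt_three])
  have hinv : (Real.sqrt (2 * Real.pi))⁻¹ ≤ 1 := inv_le_one_of_one_le₀ hs
  calc x * ((Real.sqrt (2 * Real.pi))⁻¹ * Real.exp (-x ^ 2 / 2))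
      = (Real.sqrt (2 * Real.pi))⁻¹ * (x * Real.exp (-x ^ 2 / 2)) := by ring
    _ ≤ 1 * 1 := by
        apply mul_le_mul hinv h1 (by positivity) (by norm_num)
    _ = 1 := by norm_num



lemma central {a : ℝ} (ha : 1 ≤ a) (u : ℝ) :
    |Phi (a * u) - Phi u| ≤ min (1/2) (a - 1) := by
  rcases le_or_gt 0 u with hu | hu
  · have huau : u ≤ a * u := le_mul_of_one_le_left hu ha
    have hnn : 0 ≤ Phi (a * u) - Phi u := sub_nonneg.2 (Phi_mono huau)
    rw [abs_of_nonneg hnn]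
    refine le_min ?_ ?_
    · have : Phi 0 ≤ Phi u := Phi_mono hu
      have := Phi_le_one (a * u)
      rw [Phi_zero] at *
      linarith [Phi_mono hu, Phi_le_one (a*u), Phi_zero]
    · rw [Phi_diff huau]
      calc ∫ x in Set.Ioc u (a*u), gaussianPDFReal 0 1 x
          ≤ (a*u - u) * gaussianPDFReal 0 1 u :=
            integral_pdf_le huau (fun x hx => pdf_anti hu (le_of_lt hx.1))
        _ = (a - 1) * (u * gaussianPDFReal 0 1 u) := by ring
        _ ≤ (a - 1) * 1 := by
            apply mul_le_mul_of_nonneg_left (mul_pdf_le_one hu) (by linarith)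
        _ = a - 1 := by ring
  · have huau : a * u ≤ u := by nlinarith
    have hnn : 0 ≤ Phi u - Phi (a * u) := sub_nonneg.2 (Phi_mono huau)
    rw [abs_sub_comm, abs_of_nonneg hnn]
    refine le_min ?_ ?_
    · have h1 : Phi u ≤ Phi 0 := Phi_mono hu.le
      rw [Phi_zero] at h1
      linarith [Phi_nonneg (a*u)]
    · rw [Phi_diff huau]
      have hCu : ∀ x ∈ Set.Ioc (a*u) u, gaussianPDFReal 0 1 x ≤ gaussianPDFReal 0 1 u := by
        intro x hx
        rw [← pdf_even x, ← pdf_even u]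
        exact pdf_anti (by linarith [hx.2]) (by linarith [hx.2])
      calc ∫ x in Set.Ioc (a*u) u, gaussianPDFReal 0 1 x
          ≤ (u - a*u) * gaussianPDFReal 0 1 u := integral_pdf_le huau hCu
        _ = (a - 1) * ((-u) * gaussianPDFReal 0 1 (-(-u))) := by ring_nf
        _ ≤ (a - 1) * 1 := by
            rw [neg_neg, show (-u) * gaussianPDFReal 0 1 u = (-u) * gaussianPDFReal 0 1 (-(-u)) by rw [neg_neg]]
            rw [pdf_even]
            exact mul_le_mul_of_nonneg_left (mul_pdf_le_one (by linarith)) (by linarith)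
        _ = a - 1 := by ring


lemma L (σ τ : ℝ) (hσ : 0 < σ) (hτ : 0 < τ) (z : ℝ) :
    |((gaussianReal 0 ⟨σ ^ 2, sq_nonneg σ⟩) (Set.Iic z)).toReal -
      ((gaussianReal 0 ⟨τ ^ 2, sq_nonneg τ⟩) (Set.Iic z)).toReal| ≤ |1 - σ ^ 2 / τ ^ 2| := by
  rw [cdf_eq σ hσ, cdf_eq τ hτ]
  rcases le_total σ τ with hστ | hστ
  · have ha : 1 ≤ τ / σ := (one_le_div hσ).2 hστ
    have hmul : (τ / σ) * (z / τ) = z / σ := by field_simp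
    have h := central ha (z / τ)
    rw [hmul] at h
    have habs : |1 - σ ^ 2 / τ ^ 2| = 1 - σ ^ 2 / τ ^ 2 := by
      rw [abs_of_nonneg]
      have : σ ^ 2 / τ ^ 2 ≤ 1 := by
        rw [div_le_one (by positivity)]; nlinarith
      linarith
    rw [habs]
    refine h.trans ?_
    rcases le_total (2 * σ ^ 2) (τ ^ 2) with h2 | h2
    · refine (min_le_left _ _).trans ?_
      have : σ ^ 2 / τ ^ 2 ≤ 1/2 := by
        rw [div_le_div_iff₀ (by positivity) (by norm_num)]; linarith
      linarith
    · refine (min_le_right _ _).trans ?_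
      have e1 : τ / σ - 1 = (τ - σ) / σ := by field_simp
      have e2 : 1 - σ ^ 2 / τ ^ 2 = (τ ^ 2 - σ ^ 2) / τ ^ 2 := by field_simp
      rw [e1, e2, div_le_div_iff₀ hσ (by positivity)]
      nlinarith [mul_nonneg (sub_nonneg.2 hστ) (by linarith : (0:ℝ) ≤ 2 * σ ^ 2 - τ ^ 2),
        mul_nonneg hσ.le (sq_nonneg (τ - σ))]
  · have ha : 1 ≤ σ / τ := (one_le_div hτ).2 hστ
    have hmul : (σ / τ) * (z / σ) = z / τ := by field_simp
    have h := central ha (z / σ)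
    rw [hmul, abs_sub_comm] at h
    have hge : 1 ≤ σ ^ 2 / τ ^ 2 := by
      rw [le_div_iff₀ (by positivity)]; nlinarith
    have habs : |1 - σ ^ 2 / τ ^ 2| = σ ^ 2 / τ ^ 2 - 1 := by
      rw [abs_of_nonpos (by linarith)]; ring
    rw [habs]
    refine h.trans ((min_le_right _ _).trans ?_)
    have : σ / τ ≤ σ ^ 2 / τ ^ 2 := by
      rw [show σ ^ 2 / τ ^ 2 = (σ / τ) ^ 2 by rw [div_pow]]
      nlinarith
    linarith

/-- Kolmogorov distance between `N(0,σ²)` and `N(0,τ²)` is at most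
`min(|1 - τ²/σ²|, |1 - σ²/τ²|)`. -/
theorem stmt_5 (σ τ : ℝ) (hσ : 0 < σ) (hτ : 0 < τ) :
    ⨆ z : ℝ, |((gaussianReal 0 ⟨σ ^ 2, sq_nonneg σ⟩) (Set.Iic z)).toReal -
        ((gaussianReal 0 ⟨τ ^ 2, sq_nonneg τ⟩) (Set.Iic z)).toReal| ≤
      min |1 - τ ^ 2 / σ ^ 2| |1 - σ ^ 2 / τ ^ 2| := by
  refine le_min (Real.iSup_le (fun z => ?_) (abs_nonneg _))
    (Real.iSup_le (fun z => ?_) (abs_nonneg _))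
  · rw [abs_sub_comm]
    exact L τ σ hτ hσ z
  · exact L σ τ hσ hτ z
end

section
/- For positive reals σ and τ, the Wasserstein distance between the centered normal distributions N(0,σ²) and N(0,τ²) is at most 2·min(σ|1 - τ²/σ²|, τ|1 - σ²/τ²|). -/
open MeasureTheory ProbabilityTheory

open Real Set
open scoped NNReal ENNReal

lemma aux_ioi : ∫ x in Ioi (0:ℝ), x * rexp (-(2⁻¹) * x ^ 2) = 1 := by
  have h := integral_mul_cexp_neg_mul_sq (b := (2⁻¹ : ℂ)) (by norm_num)
  have heq : ∀ r : ℝ, (r : ℂ) * Complex.exp (-(2⁻¹:ℂ) * (r:ℂ)^2)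
      = ((r * rexp (-(2⁻¹) * r ^ 2) : ℝ) : ℂ) := by
    intro r
    push_cast [Complex.ofReal_exp]
    ring_nf
  rw [MeasureTheory.setIntegral_congr_fun measurableSet_Ioi (fun r _ => heq r)] at h
  have h3 : (∫ x in Ioi (0:ℝ), ((x * rexp (-(2⁻¹) * x ^ 2) : ℝ) : ℂ))
      = ((∫ x in Ioi (0:ℝ), x * rexp (-(2⁻¹) * x ^ 2) : ℝ) : ℂ) := integral_ofReal
  rw [h3] at h
  have h2 := congrArg Complex.re h
  simpa using h2

lemma aux_pdf_nn : Measurable (fun x => Real.toNNReal (gaussianPDFReal 0 1 x)) :=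
  (measurable_gaussianPDFReal 0 1).real_toNNReal

lemma aux_density : gaussianReal 0 1
    = volume.withDensity (fun x => ((Real.toNNReal (gaussianPDFReal 0 1 x) : ℝ≥0) : ℝ≥0∞)) := by
  rw [gaussianReal_of_var_ne_zero 0 one_ne_zero]
  rfl

lemma aux_abs_integrable : Integrable (fun x => |x|) (gaussianReal 0 1) := by
  rw [aux_density, integrable_withDensity_iff_integrable_smul aux_pdf_nn]
  have h1 : Integrable (fun x : ℝ => (√(2 * π))⁻¹ * (|x| * rexp (-(2⁻¹) * x ^ 2))) := by
    have := (integrable_mul_exp_neg_mul_sq (b := 2⁻¹) (by norm_num)).abs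
    have h2 : (fun x : ℝ => |x * rexp (-(2⁻¹) * x ^ 2)|)
        = fun x : ℝ => |x| * rexp (-(2⁻¹) * x ^ 2) := by
      funext x; rw [abs_mul, abs_of_pos (exp_pos _)]
    rw [h2] at this
    exact this.const_mul _
  refine h1.congr (ae_of_all _ fun x => ?_)
  simp only [NNReal.smul_def, smul_eq_mul, Real.coe_toNNReal _ (gaussianPDFReal_nonneg 0 1 x)]
  rw [gaussianPDFReal]
  push_cast
  rw [mul_one, mul_one, sub_zero]
  ring_nf

lemma aux_abs_le : ∫ x, |x| ∂(gaussianReal 0 1) ≤ 1 := by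
  rw [aux_density, integral_withDensity_eq_integral_smul aux_pdf_nn]
  have heq : (fun x => (Real.toNNReal (gaussianPDFReal 0 1 x)) • |x|)
      = fun x : ℝ => (√(2 * π))⁻¹ * ((fun t => t * rexp (-(2⁻¹) * t ^ 2)) |x|) := by
    funext x
    simp only [NNReal.smul_def, smul_eq_mul, Real.coe_toNNReal _ (gaussianPDFReal_nonneg 0 1 x)]
    rw [gaussianPDFReal]
    push_cast
    rw [mul_one, mul_one, sub_zero, sq_abs]
    ring_nf
  rw [heq, integral_const_mul, integral_comp_abs (f := fun t => t * rexp (-(2⁻¹) * t ^ 2)), aux_ioi]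
  rw [mul_one]
  rw [inv_mul_le_iff₀ (by positivity), mul_one]
  nlinarith [Real.sq_sqrt (by positivity : (0:ℝ) ≤ 2 * π), Real.sqrt_nonneg (2 * π),
    pi_gt_three]


lemma aux_lip_integrable (h : ℝ → ℝ) (hh : LipschitzWith 1 h) (c : ℝ) :
    Integrable (fun x => h (c * x)) (gaussianReal 0 1) := by
  refine ((aux_abs_integrable.const_mul |c|).add (integrable_const |h 0|)).mono'
    ((hh.continuous.comp (continuous_const.mul continuous_id)).aestronglyMeasurable)
    (ae_of_all _ fun x => ?_)
  have h1 : |h (c * x) - h 0| ≤ |c| * |x| := by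
    have := hh.dist_le_mul (c * x) 0
    simpa [Real.dist_eq, abs_mul] using this
  have h3 : |h (c * x)| ≤ |h (c * x) - h 0| + |h 0| := by
    calc |h (c * x)| = |(h (c * x) - h 0) + h 0| := by ring_nf
      _ ≤ |h (c * x) - h 0| + |h 0| := abs_add_le _ _
  rw [Real.norm_eq_abs]
  simp only [Pi.add_apply]
  linarith

/-- Wasserstein distance between `N(0,σ²)` and `N(0,τ²)` is at most
`2 min(σ|1 - τ²/σ²|, τ|1 - σ²/τ²|)`: every 1-Lipschitz test function
distinguishes them by at most this amount. -/
theorem stmt_6 (σ τ : ℝ) (hσ : 0 < σ) (hτ : 0 < τ) (h : ℝ → ℝ)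
    (hh : LipschitzWith 1 h) :
    |(∫ x, h x ∂(gaussianReal 0 ⟨σ ^ 2, sq_nonneg σ⟩)) -
        ∫ x, h x ∂(gaussianReal 0 ⟨τ ^ 2, sq_nonneg τ⟩)| ≤
      2 * min (σ * |1 - τ ^ 2 / σ ^ 2|) (τ * |1 - σ ^ 2 / τ ^ 2|) := by
  have hmap : ∀ c : ℝ, gaussianReal 0 ⟨c ^ 2, sq_nonneg c⟩ = (gaussianReal 0 1).map (c * ·) := by
    intro c
    rw [gaussianReal_map_const_mul]
    congr 1
    · simp
    · ext : 1; simp; rfl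
  rw [hmap σ, hmap τ,
    integral_map (measurable_const_mul σ).aemeasurable hh.continuous.aestronglyMeasurable,
    integral_map (measurable_const_mul τ).aemeasurable hh.continuous.aestronglyMeasurable,
    ← integral_sub (aux_lip_integrable h hh σ) (aux_lip_integrable h hh τ)]
  have key : |∫ x, (h (σ * x) - h (τ * x)) ∂(gaussianReal 0 1)| ≤ |σ - τ| := by
    calc |∫ x, (h (σ * x) - h (τ * x)) ∂(gaussianReal 0 1)|
        ≤ ∫ x, |h (σ * x) - h (τ * x)| ∂(gaussianReal 0 1) := by
          simpa [Real.norm_eq_abs] using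
            norm_integral_le_integral_norm (μ := gaussianReal 0 1)
              (f := fun x => h (σ * x) - h (τ * x))
      _ ≤ ∫ x, |σ - τ| * |x| ∂(gaussianReal 0 1) := by
          refine integral_mono_of_nonneg (ae_of_all _ fun x => abs_nonneg _)
            (aux_abs_integrable.const_mul _) (ae_of_all _ fun x => ?_)
          have hd := hh.dist_le_mul (σ * x) (τ * x)
          simp only [Real.dist_eq, NNReal.coe_one, one_mul] at hd
          calc |h (σ * x) - h (τ * x)| ≤ |σ * x - τ * x| := hd
            _ = |σ - τ| * |x| := by rw [← abs_mul]; ring_nf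
      _ = |σ - τ| * ∫ x, |x| ∂(gaussianReal 0 1) := integral_const_mul _ _
      _ ≤ |σ - τ| * 1 := mul_le_mul_of_nonneg_left aux_abs_le (abs_nonneg _)
      _ = |σ - τ| := mul_one _
  refine key.trans ?_
  have hA : |σ - τ| ≤ σ * |1 - τ ^ 2 / σ ^ 2| := by
    have e2 : (1 : ℝ) - τ ^ 2 / σ ^ 2 = (σ - τ) * (σ + τ) / σ ^ 2 := by field_simp; ring
    rw [e2, abs_div, abs_mul, abs_of_pos (add_pos hσ hτ), abs_of_pos (pow_pos hσ 2)]
    have e3 : σ * (|σ - τ| * (σ + τ) / σ ^ 2) = |σ - τ| * ((σ + τ) / σ) := by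
      field_simp
    rw [e3]
    exact le_mul_of_one_le_right (abs_nonneg _) ((one_le_div hσ).mpr (by linarith))
  have hB : |σ - τ| ≤ τ * |1 - σ ^ 2 / τ ^ 2| := by
    have e2 : (1 : ℝ) - σ ^ 2 / τ ^ 2 = (τ - σ) * (τ + σ) / τ ^ 2 := by field_simp; ring
    rw [e2, abs_div, abs_mul, abs_of_pos (add_pos hτ hσ), abs_of_pos (pow_pos hτ 2),
      abs_sub_comm τ σ]
    have e3 : τ * (|σ - τ| * (τ + σ) / τ ^ 2) = |σ - τ| * ((τ + σ) / τ) := by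
      field_simp
    rw [e3]
    exact le_mul_of_one_le_right (abs_nonneg _) ((one_le_div hτ).mpr (by linarith))
  have hmin : |σ - τ| ≤ min (σ * |1 - τ ^ 2 / σ ^ 2|) (τ * |1 - σ ^ 2 / τ ^ 2|) := le_min hA hB
  refine hmin.trans ?_
  refine le_mul_of_one_le_left ?_ one_le_two
  exact le_min (by positivity) (by positivity)
end

section
/- For any constant c > 0 and standard normal ζ, sup_{z∈ℝ} |P(cζ ≤ z) - P(ζ ≤ z)| ≤ |1 - c²|. -/
open MeasureTheory ProbabilityTheory Set
open scoped ENNReal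

noncomputable def myF (x : ℝ) : ℝ := ((gaussianReal 0 1) (Set.Iic x)).toReal

lemma myF_mono : Monotone myF := fun a b hab =>
  ENNReal.toReal_mono (measure_ne_top _ _) (measure_mono (Iic_subset_Iic.2 hab))

lemma myF_nonneg (x : ℝ) : 0 ≤ myF x := ENNReal.toReal_nonneg

lemma myF_le_one (x : ℝ) : myF x ≤ 1 := by
  have := prob_le_one (μ := gaussianReal 0 1) (s := Set.Iic x)
  simpa [myF] using ENNReal.toReal_mono (by simp) this

lemma myF_zero : myF 0 = 1/2 := by
  have hmap := gaussianReal_map_const_mul (μ := 0) (v := 1) (-1)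
  have h1 : (⟨(-1:ℝ)^2, sq_nonneg _⟩ : NNReal) * 1 = 1 := by
    ext; norm_num
  replace hmap : Measure.map (fun x : ℝ => -1 * x) (gaussianReal 0 1) = gaussianReal 0 1 := by
    rw [hmap, mul_zero]; congr 1
  have hsym : (gaussianReal 0 1) (Set.Ici 0) = (gaussianReal 0 1) (Set.Iic 0) := by
    conv_rhs => rw [← hmap]
    rw [Measure.map_apply (by fun_prop) measurableSet_Iic]
    congr 1
    ext x
    simp
  have hzero : (gaussianReal 0 1) ({0} : Set ℝ) = 0 :=
    gaussianReal_absolutelyContinuous 0 (by norm_num) (by simp)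
  have hIoi : (gaussianReal 0 1) (Set.Ioi 0) = (gaussianReal 0 1) (Set.Iic 0) := by
    have : (gaussianReal 0 1) (Set.Ici 0) = (gaussianReal 0 1) ({0} : Set ℝ) + (gaussianReal 0 1) (Set.Ioi 0) := by
      rw [← measure_union (by simp [Set.disjoint_left]) measurableSet_Ioi]
      congr 1
      ext x
      simp [le_iff_lt_or_eq, or_comm, eq_comm]
    rw [hzero, zero_add] at this
    rw [← this, hsym]
  have htot : (gaussianReal 0 1) (Set.Iic 0) + (gaussianReal 0 1) (Set.Ioi 0) = 1 := by
    rw [← measure_union (Set.Iic_disjoint_Ioi le_rfl) measurableSet_Ioi]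
    simp [Set.Iic_union_Ioi]
  rw [hIoi] at htot
  have h2 : (2 : ℝ≥0∞) * (gaussianReal 0 1) (Set.Iic 0) = 1 := by
    rw [two_mul]; exact htot
  have := congrArg ENNReal.toReal h2
  rw [ENNReal.toReal_mul] at this
  simp only [ENNReal.toReal_ofNat, ENNReal.toReal_one] at this
  unfold myF
  linarith

lemma myF_diff {a b : ℝ} (hab : a ≤ b) :
    myF b - myF a = ∫ x in Set.Ioc a b, gaussianPDFReal 0 1 x := by
  have hsplit : (gaussianReal 0 1) (Set.Iic b) =
      (gaussianReal 0 1) (Set.Iic a) + (gaussianReal 0 1) (Set.Ioc a b) := by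
    rw [← measure_union (by simp [Set.disjoint_left]; intro x h1 h2; linarith) measurableSet_Ioc,
      Set.Iic_union_Ioc_eq_Iic hab]
  have hint : (gaussianReal 0 1) (Set.Ioc a b)
      = ENNReal.ofReal (∫ x in Set.Ioc a b, gaussianPDFReal 0 1 x) :=
    gaussianReal_apply_eq_integral 0 (by norm_num) _
  have hnn : 0 ≤ ∫ x in Set.Ioc a b, gaussianPDFReal 0 1 x :=
    setIntegral_nonneg measurableSet_Ioc (fun x _ => gaussianPDFReal_nonneg 0 1 x)
  unfold myF
  rw [hsplit, ENNReal.toReal_add (measure_ne_top _ _) (measure_ne_top _ _), hint,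
    ENNReal.toReal_ofReal hnn]
  ring

lemma myG_mono {x y : ℝ} (h : y^2 ≤ x^2) :
    gaussianPDFReal 0 1 x ≤ gaussianPDFReal 0 1 y := by
  unfold gaussianPDFReal
  simp only [sub_zero, NNReal.coe_one, mul_one]
  gcongr
  all_goals first
    | positivity
    | nlinarith
    | exact Real.exp_le_exp.2 (by nlinarith)

lemma myG_mul_abs_le (t : ℝ) : gaussianPDFReal 0 1 t * |t| ≤ 1 := by
  unfold gaussianPDFReal
  simp only [sub_zero, NNReal.coe_one, mul_one]
  have h0 : |t| ≤ Real.exp (t^2/2) := by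
    have h1 := Real.add_one_le_exp (t^2/2)
    nlinarith [sq_abs t, sq_nonneg (|t|-1)]
  have hs : 1 ≤ Real.sqrt (2*Real.pi) := by
    rw [show (1:ℝ) = Real.sqrt 1 by simp]
    exact Real.sqrt_le_sqrt (by nlinarith [Real.pi_gt_three])
  have h2 : (Real.sqrt (2*Real.pi))⁻¹ ≤ 1 := inv_le_one_of_one_le₀ hs
  have h3 : Real.exp (-t^2/2) * |t| ≤ 1 := by
    rw [show (-t^2/2 : ℝ) = -(t^2/2) by ring, Real.exp_neg]
    have he := Real.exp_pos (t^2/2)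
    have hc : Real.exp (t^2/2) * (Real.exp (t^2/2))⁻¹ = 1 := mul_inv_cancel₀ he.ne'
    nlinarith [inv_nonneg.2 he.le, abs_nonneg t]
  have hexp := Real.exp_pos (-t^2/2)
  have habs := abs_nonneg t
  nlinarith [mul_nonneg hexp.le habs]

lemma myF_diff_le {a b m : ℝ} (hab : a ≤ b) (hm : ∀ x ∈ Set.Ioc a b, m^2 ≤ x^2) :
    myF b - myF a ≤ gaussianPDFReal 0 1 m * (b - a) := by
  rw [myF_diff hab]
  have hint : IntegrableOn (gaussianPDFReal 0 1) (Set.Ioc a b) volume :=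
    (integrable_gaussianPDFReal 0 1).integrableOn
  calc ∫ x in Set.Ioc a b, gaussianPDFReal 0 1 x
      ≤ ∫ _x in Set.Ioc a b, gaussianPDFReal 0 1 m :=
        setIntegral_mono_on hint (integrableOn_const measure_Ioc_lt_top.ne)
          measurableSet_Ioc (fun x hx => myG_mono (hm x hx))
    _ = gaussianPDFReal 0 1 m * (b - a) := by
        rw [setIntegral_const, Real.volume_real_Ioc_of_le hab, smul_eq_mul]
        ring

lemma myKey {c : ℝ} (hc : 0 < c) (w : ℝ) : |myF w - myF (c*w)| ≤ |1 - c^2| := by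
  rcases le_or_gt (1/2 : ℝ) |1 - c^2| with hbig | hsmall
  · rcases le_or_gt 0 w with hw | hw
    · have h1 : 1/2 ≤ myF w := myF_zero ▸ myF_mono hw
      have h2 : 1/2 ≤ myF (c*w) := myF_zero ▸ myF_mono (by positivity)
      have h3 := myF_le_one w; have h4 := myF_le_one (c*w)
      rw [abs_sub_le_iff]; constructor <;> linarith
    · have h1 : myF w ≤ 1/2 := myF_zero ▸ myF_mono hw.le
      have h2 : myF (c*w) ≤ 1/2 := myF_zero ▸ myF_mono (by nlinarith)
      have h3 := myF_nonneg w; have h4 := myF_nonneg (c*w)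
      rw [abs_sub_le_iff]; constructor <;> linarith
  · have hc2 : 1/2 < c^2 := by
      have h := abs_lt.1 hsmall
      linarith [h.1, h.2]
    have hcc : 1 ≤ c + c^2 := by rcases le_total 1 c with h|h <;> nlinarith
    have hB : 0 ≤ |1 - c^2| := abs_nonneg _
    rcases le_total c 1 with h1 | h1
    · have habs : |1 - c^2| = 1 - c^2 := abs_of_nonneg (by nlinarith)
      rcases le_or_gt 0 w with hw | hw
      · have hmle : c*w ≤ w := by nlinarith
        have hd := myF_diff_le (a := c*w) (b := w) (m := c*w) hmle
          (fun x hx => by nlinarith [hx.1, hx.2, mul_nonneg hc.le hw])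
        have hg1 : gaussianPDFReal 0 1 (c*w) * (c*w) ≤ 1 := by
          have h := myG_mul_abs_le (c*w)
          rwa [abs_of_nonneg (by positivity)] at h
        have hg0 := gaussianPDFReal_nonneg 0 1 (c*w)
        rw [habs, abs_sub_le_iff]
        refine ⟨?_, by linarith [myF_mono hmle, (habs ▸ hB : (0:ℝ) ≤ 1 - c^2)]⟩
        have key : c * (gaussianPDFReal 0 1 (c*w) * (w - c*w)) ≤ c * (1 - c^2) := by
          nlinarith [mul_nonneg (sub_nonneg.2 h1) (sub_nonneg.2 hg1),
            mul_nonneg (sub_nonneg.2 h1) (sub_nonneg.2 hcc)]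
        have h2 := (mul_le_mul_iff_of_pos_left hc).1 key
        linarith
      · have hcw : c*w ≤ 0 := by nlinarith
        have hmle : w ≤ c*w := by nlinarith
        have hd := myF_diff_le (a := w) (b := c*w) (m := c*w) hmle
          (fun x hx => by nlinarith [hx.1, hx.2])
        have hg1 : gaussianPDFReal 0 1 (c*w) * (-(c*w)) ≤ 1 := by
          have h := myG_mul_abs_le (c*w)
          rwa [abs_of_nonpos hcw] at h
        have hg0 := gaussianPDFReal_nonneg 0 1 (c*w)
        rw [habs, abs_sub_le_iff]
        refine ⟨by linarith [myF_mono hmle, (habs ▸ hB : (0:ℝ) ≤ 1 - c^2)], ?_⟩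
        have key : c * (gaussianPDFReal 0 1 (c*w) * (c*w - w)) ≤ c * (1 - c^2) := by
          nlinarith [mul_nonneg (sub_nonneg.2 h1) (sub_nonneg.2 hg1),
            mul_nonneg (sub_nonneg.2 h1) (sub_nonneg.2 hcc)]
        have h2 := (mul_le_mul_iff_of_pos_left hc).1 key
        linarith
    · have habs : |1 - c^2| = c^2 - 1 := by
        rw [abs_of_nonpos (by nlinarith)]; ring
      rcases le_or_gt 0 w with hw | hw
      · have hmle : w ≤ c*w := by nlinarith
        have hd := myF_diff_le (a := w) (b := c*w) (m := w) hmle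
          (fun x hx => by nlinarith [hx.1, hx.2])
        have hg1 : gaussianPDFReal 0 1 w * w ≤ 1 := by
          have h := myG_mul_abs_le w
          rwa [abs_of_nonneg hw] at h
        have hg0 := gaussianPDFReal_nonneg 0 1 w
        rw [habs, abs_sub_le_iff]
        refine ⟨by linarith [myF_mono hmle, (habs ▸ hB : (0:ℝ) ≤ c^2 - 1)], ?_⟩
        nlinarith [mul_nonneg (sub_nonneg.2 h1) (sub_nonneg.2 hg1),
          mul_nonneg (sub_nonneg.2 h1) hc.le]
      · have hmle : c*w ≤ w := by nlinarith
        have hd := myF_diff_le (a := c*w) (b := w) (m := w) hmle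
          (fun x hx => by nlinarith [hx.1, hx.2, hw.le])
        have hg1 : gaussianPDFReal 0 1 w * (-w) ≤ 1 := by
          have h := myG_mul_abs_le w
          rwa [abs_of_nonpos hw.le] at h
        have hg0 := gaussianPDFReal_nonneg 0 1 w
        rw [habs, abs_sub_le_iff]
        refine ⟨?_, by linarith [myF_mono hmle, (habs ▸ hB : (0:ℝ) ≤ c^2 - 1)]⟩
        nlinarith [mul_nonneg (sub_nonneg.2 h1) (sub_nonneg.2 hg1),
          mul_nonneg (sub_nonneg.2 h1) hc.le]

/-- For `c > 0` and a standard normal `ζ`,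
`sup_z |P(cζ ≤ z) - P(ζ ≤ z)| ≤ |1 - c²|`. -/
theorem stmt_7 {Ω : Type*} [MeasureSpace Ω] [IsProbabilityMeasure (ℙ : Measure Ω)]
    (ζ : Ω → ℝ) (hζ : Measure.map ζ ℙ = gaussianReal 0 1)
    (c : ℝ) (hc : 0 < c) :
    ⨆ z : ℝ, |(ℙ {ω | c * ζ ω ≤ z}).toReal - (ℙ {ω | ζ ω ≤ z}).toReal| ≤
      |1 - c ^ 2| := by
  have hae : AEMeasurable ζ ℙ := by
    by_contra h
    rw [Measure.map_of_not_aemeasurable h] at hζ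
    exact (IsProbabilityMeasure.ne_zero (gaussianReal 0 1)) hζ.symm
  have hPz : ∀ x : ℝ, ℙ {ω | ζ ω ≤ x} = gaussianReal 0 1 (Set.Iic x) := fun x => by
    rw [← hζ, Measure.map_apply_of_aemeasurable hae measurableSet_Iic]; rfl
  refine Real.iSup_le (fun z => ?_) (abs_nonneg _)
  have hset : {ω | c * ζ ω ≤ z} = {ω | ζ ω ≤ z/c} := by
    ext ω; simp only [Set.mem_setOf_eq, le_div_iff₀ hc, mul_comm]
  have h1 : (ℙ {ω | c * ζ ω ≤ z}).toReal = myF (z/c) := by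
    rw [hset, hPz]; rfl
  have h2 : (ℙ {ω | ζ ω ≤ z}).toReal = myF (c * (z/c)) := by
    rw [hPz]
    congr 2
    field_simp
  rw [h1, h2]
  exact myKey hc (z/c)
end

section
/- Let U and V be nonnegative random variables, σ > 0, and ζ a standard normal random variable independent of both U and V. Then the Kolmogorov distance between the laws of σ√U·ζ and σ√V·ζ is at most the Kolmogorov distance between the laws of U and V. -/
open MeasureTheory ProbabilityTheory Filter

section Aux

variable {Ω : Type*} [MeasureSpace Ω] [IsProbabilityMeasure (ℙ : Measure Ω)]

lemma aux_toReal_le_one {α : Type*} [MeasurableSpace α] (m : Measure α)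
    [IsProbabilityMeasure m] (s : Set α) : (m s).toReal ≤ 1 := by
  have := ENNReal.toReal_mono (a := m s) (b := 1) (by simp) prob_le_one
  simpa using this

lemma kol_bdd (U V : Ω → ℝ) :
    BddAbove (Set.range fun t : ℝ =>
      |(ℙ {ω | U ω ≤ t}).toReal - (ℙ {ω | V ω ≤ t}).toReal|) := by
  refine ⟨1, ?_⟩
  rintro x ⟨t, rfl⟩
  have h1 := aux_toReal_le_one ℙ {ω | U ω ≤ t}
  have h2 := aux_toReal_le_one ℙ {ω | V ω ≤ t}
  have h3 : (0:ℝ) ≤ (ℙ {ω | U ω ≤ t}).toReal := ENNReal.toReal_nonneg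
  have h4 : (0:ℝ) ≤ (ℙ {ω | V ω ≤ t}).toReal := ENNReal.toReal_nonneg
  rw [abs_sub_le_iff]
  constructor <;> linarith

lemma kol_le (U V : Ω → ℝ) (t : ℝ) :
    |(ℙ {ω | U ω ≤ t}).toReal - (ℙ {ω | V ω ≤ t}).toReal| ≤
      ⨆ t : ℝ, |(ℙ {ω | U ω ≤ t}).toReal - (ℙ {ω | V ω ≤ t}).toReal| :=
  le_ciSup (kol_bdd U V) t

lemma kol_lt_bound (U V : Ω → ℝ) (r : ℝ) :
    |(ℙ {ω | U ω < r}).toReal - (ℙ {ω | V ω < r}).toReal| ≤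
      ⨆ t : ℝ, |(ℙ {ω | U ω ≤ t}).toReal - (ℙ {ω | V ω ≤ t}).toReal| := by
  have htendsto : ∀ W : Ω → ℝ,
      Tendsto (fun n : ℕ => (ℙ {ω | W ω ≤ r - 1/(n+1)}).toReal) atTop
        (nhds (ℙ {ω | W ω < r}).toReal) := by
    intro W
    have hmono : Monotone fun n : ℕ => {ω | W ω ≤ r - 1/(n+1)} := by
      intro n m hnm ω hω
      have h1 : (1:ℝ)/(m+1) ≤ 1/(n+1) := by
        apply one_div_le_one_div_of_le (by positivity)
        have := (Nat.cast_le (α := ℝ)).2 hnm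
        linarith
      simp only [Set.mem_setOf_eq] at hω ⊢
      linarith
    have hun : (⋃ n : ℕ, {ω | W ω ≤ r - 1/(n+1)}) = {ω | W ω < r} := by
      ext ω
      simp only [Set.mem_iUnion, Set.mem_setOf_eq]
      constructor
      · rintro ⟨n, hn⟩
        have : (0:ℝ) < 1/(n+1) := by positivity
        linarith
      · intro h
        obtain ⟨n, hn⟩ := exists_nat_one_div_lt (sub_pos.2 h)
        exact ⟨n, by linarith⟩
    have h := tendsto_measure_iUnion_atTop (μ := ℙ) hmono
    rw [hun] at h
    exact (ENNReal.tendsto_toReal (measure_ne_top _ _)).comp h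
  have hd := ((htendsto U).sub (htendsto V)).abs
  exact le_of_tendsto hd (Eventually.of_forall fun n => kol_le U V (r - 1/(n+1)))

end Aux

/-- For nonnegative random variables `U`, `V`, `σ > 0` and a standard normal `ζ`
independent of each of them, the Kolmogorov distance between the laws of `σ√U ζ`
and `σ√V ζ` is at most the Kolmogorov distance between the laws of `U` and `V`. -/
theorem stmt_9 {Ω : Type*} [MeasureSpace Ω] [IsProbabilityMeasure (ℙ : Measure Ω)]
    (U V ζ : Ω → ℝ) (hUmeas : Measurable U) (hVmeas : Measurable V)
    (hζmeas : Measurable ζ)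
    (hU : ∀ ω, 0 ≤ U ω) (hV : ∀ ω, 0 ≤ V ω)
    (hζ : Measure.map ζ ℙ = gaussianReal 0 1)
    (hζU : IndepFun ζ U ℙ) (hζV : IndepFun ζ V ℙ)
    (σ : ℝ) (hσ : 0 < σ) :
    ⨆ z : ℝ, |(ℙ {ω | σ * Real.sqrt (U ω) * ζ ω ≤ z}).toReal -
        (ℙ {ω | σ * Real.sqrt (V ω) * ζ ω ≤ z}).toReal| ≤
      ⨆ t : ℝ, |(ℙ {ω | U ω ≤ t}).toReal - (ℙ {ω | V ω ≤ t}).toReal| := by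
  set K := ⨆ t : ℝ, |(ℙ {ω | U ω ≤ t}).toReal - (ℙ {ω | V ω ≤ t}).toReal| with hKdef
  refine ciSup_le fun z => ?_
  set γ : Measure ℝ := gaussianReal 0 1 with hγdef
  have hKnonneg : 0 ≤ K := le_trans (abs_nonneg _) (kol_le U V 0)
  set A : Set (ℝ × ℝ) := {p | σ * Real.sqrt p.2 * p.1 ≤ z} with hAdef
  have hAmeas : MeasurableSet A := by
    have hm : Measurable fun p : ℝ × ℝ => σ * Real.sqrt p.2 * p.1 :=
      (measurable_const.mul ((Real.continuous_sqrt.measurable).comp measurable_snd)).mul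
        measurable_fst
    exact measurableSet_le hm measurable_const
  -- representation via Fubini
  have key : ∀ (W : Ω → ℝ), Measurable W → IndepFun ζ W ℙ →
      (ℙ {ω | σ * Real.sqrt (W ω) * ζ ω ≤ z}).toReal
        = ∫ s, ((Measure.map W ℙ) (Prod.mk s ⁻¹' A)).toReal ∂γ := by
    intro W hW hind
    haveI : IsProbabilityMeasure (Measure.map W ℙ) := Measure.isProbabilityMeasure_map hW.aemeasurable
    have hmap : Measure.map (fun ω => (ζ ω, W ω)) ℙ = γ.prod (Measure.map W ℙ) := by
      rw [← hζ]
      exact (indepFun_iff_map_prod_eq_prod_map_map hζmeas.aemeasurable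
        hW.aemeasurable).mp hind
    have hset : {ω | σ * Real.sqrt (W ω) * ζ ω ≤ z} = (fun ω => (ζ ω, W ω)) ⁻¹' A := rfl
    rw [hset, ← Measure.map_apply (hζmeas.prodMk hW) hAmeas, hmap,
      Measure.prod_apply hAmeas]
    rw [← integral_toReal ((measurable_measure_prodMk_left hAmeas).aemeasurable)
      (ae_of_all _ fun s => measure_lt_top _ _)]
  -- pointwise slice bound
  have hslice : ∀ s : ℝ,
      |((Measure.map U ℙ) (Prod.mk s ⁻¹' A)).toReal - ((Measure.map V ℙ) (Prod.mk s ⁻¹' A)).toReal| ≤ K := by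
    intro s
    have hsl : MeasurableSet (Prod.mk s ⁻¹' A) := measurable_prodMk_left hAmeas
    have hmapW : ∀ (W : Ω → ℝ), Measurable W →
        (Measure.map W ℙ) (Prod.mk s ⁻¹' A) = ℙ {ω | σ * Real.sqrt (W ω) * s ≤ z} := by
      intro W hW
      rw [Measure.map_apply hW hsl]
      rfl
    rw [hmapW U hUmeas, hmapW V hVmeas]
    rcases lt_trichotomy s 0 with hs | hs | hs
    · -- s < 0
      have hσs : σ * s < 0 := mul_neg_of_pos_of_neg hσ hs
      set c : ℝ := z / (σ * s) with hcdef
      have hiff : ∀ u : ℝ, (σ * Real.sqrt u * s ≤ z) ↔ c ≤ Real.sqrt u := by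
        intro u
        have h1 : σ * Real.sqrt u * s = Real.sqrt u * (σ * s) := by ring
        rw [h1, hcdef, div_le_iff_of_neg hσs]
      rcases le_or_gt c 0 with hc | hc
      · have e1 : {ω | σ * Real.sqrt (U ω) * s ≤ z} = Set.univ := by
          ext ω; simp only [Set.mem_setOf_eq, Set.mem_univ, iff_true, hiff]
          exact hc.trans (Real.sqrt_nonneg _)
        have e2 : {ω | σ * Real.sqrt (V ω) * s ≤ z} = Set.univ := by
          ext ω; simp only [Set.mem_setOf_eq, Set.mem_univ, iff_true, hiff]
          exact hc.trans (Real.sqrt_nonneg _)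
        rw [e1, e2, sub_self, abs_zero]; exact hKnonneg
      · have hiff2 : ∀ (W : Ω → ℝ), (∀ ω, 0 ≤ W ω) → ∀ ω,
            (σ * Real.sqrt (W ω) * s ≤ z) ↔ ¬ (W ω < c ^ 2) := by
          intro W hWnn ω
          rw [hiff, not_lt]
          constructor
          · intro h
            nlinarith [Real.sq_sqrt (hWnn ω), Real.sqrt_nonneg (W ω)]
          · intro h
            calc c = Real.sqrt (c ^ 2) := (Real.sqrt_sq hc.le).symm
              _ ≤ Real.sqrt (W ω) := Real.sqrt_le_sqrt h
        have hcompl : ∀ (W : Ω → ℝ), (∀ ω, 0 ≤ W ω) → Measurable W →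
            (ℙ {ω | σ * Real.sqrt (W ω) * s ≤ z}).toReal
              = 1 - (ℙ {ω | W ω < c ^ 2}).toReal := by
          intro W hWnn hW
          have e : {ω | σ * Real.sqrt (W ω) * s ≤ z} = {ω | W ω < c ^ 2}ᶜ := by
            ext ω; exact hiff2 W hWnn ω
          rw [e, prob_compl_eq_one_sub (measurableSet_lt hW measurable_const),
            ENNReal.toReal_sub_of_le prob_le_one (by simp)]
          simp
        rw [hcompl U hU hUmeas, hcompl V hV hVmeas]
        have : (1 - (ℙ {ω | U ω < c ^ 2}).toReal) - (1 - (ℙ {ω | V ω < c ^ 2}).toReal)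
            = -((ℙ {ω | U ω < c ^ 2}).toReal - (ℙ {ω | V ω < c ^ 2}).toReal) := by ring
        rw [this, abs_neg]
        exact kol_lt_bound U V (c ^ 2)
    · -- s = 0
      subst hs
      have e : {ω | σ * Real.sqrt (U ω) * 0 ≤ z} = {ω | σ * Real.sqrt (V ω) * 0 ≤ z} := by
        simp [mul_zero]
      rw [e, sub_self, abs_zero]; exact hKnonneg
    · -- s > 0
      have hσs : 0 < σ * s := mul_pos hσ hs
      set c : ℝ := z / (σ * s) with hcdef
      have hiff : ∀ u : ℝ, (σ * Real.sqrt u * s ≤ z) ↔ Real.sqrt u ≤ c := by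
        intro u
        have h1 : σ * Real.sqrt u * s = Real.sqrt u * (σ * s) := by ring
        rw [h1, hcdef, ← le_div_iff₀ hσs]
      rcases lt_or_ge c 0 with hc | hc
      · have e1 : {ω | σ * Real.sqrt (U ω) * s ≤ z} = ∅ := by
          ext ω
          simp only [Set.mem_setOf_eq, Set.mem_empty_iff_false, iff_false, hiff, not_le]
          exact hc.trans_le (Real.sqrt_nonneg _)
        have e2 : {ω | σ * Real.sqrt (V ω) * s ≤ z} = ∅ := by
          ext ω
          simp only [Set.mem_setOf_eq, Set.mem_empty_iff_false, iff_false, hiff, not_le]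
          exact hc.trans_le (Real.sqrt_nonneg _)
        rw [e1, e2, sub_self, abs_zero]; exact hKnonneg
      · have e : ∀ (W : Ω → ℝ), (∀ ω, 0 ≤ W ω) →
            {ω | σ * Real.sqrt (W ω) * s ≤ z} = {ω | W ω ≤ c ^ 2} := by
          intro W hWnn
          ext ω
          simp only [Set.mem_setOf_eq, hiff]
          constructor
          · intro h
            nlinarith [Real.sq_sqrt (hWnn ω), Real.sqrt_nonneg (W ω)]
          · intro h
            calc Real.sqrt (W ω) ≤ Real.sqrt (c ^ 2) := Real.sqrt_le_sqrt h
              _ = c := Real.sqrt_sq hc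
        rw [e U hU, e V hV]
        exact kol_le U V (c ^ 2)
  -- integrability
  haveI hPU : IsProbabilityMeasure (Measure.map U ℙ) := Measure.isProbabilityMeasure_map hUmeas.aemeasurable
  haveI hPV : IsProbabilityMeasure (Measure.map V ℙ) := Measure.isProbabilityMeasure_map hVmeas.aemeasurable
  have hint : ∀ (m : Measure ℝ), IsProbabilityMeasure m →
      Integrable (fun s => (m (Prod.mk s ⁻¹' A)).toReal) γ := by
    intro m hm
    haveI := hm
    have hmeasf : Measurable fun s => (m (Prod.mk s ⁻¹' A)).toReal :=
      (measurable_measure_prodMk_left hAmeas).ennreal_toReal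
    refine (integrable_const (1:ℝ)).mono' hmeasf.aestronglyMeasurable (ae_of_all _ fun s => ?_)
    rw [Real.norm_eq_abs, abs_of_nonneg ENNReal.toReal_nonneg]
    exact aux_toReal_le_one m _
  rw [key U hUmeas hζU, key V hVmeas hζV,
    ← integral_sub (hint _ hPU) (hint _ hPV)]
  have hb := norm_integral_le_of_norm_le_const (μ := γ)
    (f := fun s => ((Measure.map U ℙ) (Prod.mk s ⁻¹' A)).toReal - ((Measure.map V ℙ) (Prod.mk s ⁻¹' A)).toReal)
    (C := K) (ae_of_all _ fun s => by simpa [Real.norm_eq_abs] using hslice s)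
  simpa [Real.norm_eq_abs, measure_univ] using hb
end

section
/- Let U and V be nonnegative random variables, σ > 0, and ζ a standard normal random variable independent of both. Then the Wasserstein distance between the laws of σ√U·ζ and σ√V·ζ is at most σ·√(2/π) times the Wasserstein distance between the laws of √U and √V. -/
open MeasureTheory ProbabilityTheory Real Set Filter
open scoped ENNReal NNReal

lemma gaussAux_pdf (x : ℝ) :
    gaussianPDFReal 0 1 x = (Real.sqrt (2 * Real.pi))⁻¹ * Real.exp (-(2:ℝ)⁻¹ * x ^ 2) := by
  simp only [gaussianPDFReal, NNReal.coe_one, mul_one, sub_zero]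
  ring_nf

lemma gaussAux_Ioi : ∫ x in Ioi (0:ℝ), x * Real.exp (-(2:ℝ)⁻¹ * x ^ 2) = 1 := by
  have hderiv : ∀ x ∈ Ici (0:ℝ), HasDerivAt (fun y : ℝ => -Real.exp (-(2:ℝ)⁻¹ * y ^ 2))
      (x * Real.exp (-(2:ℝ)⁻¹ * x ^ 2)) x := by
    intro x _
    have h1 : HasDerivAt (fun y : ℝ => -(2:ℝ)⁻¹ * y ^ 2) (-(2:ℝ)⁻¹ * (2 * x)) x := by
      simpa using (hasDerivAt_pow 2 x).const_mul (-(2:ℝ)⁻¹)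
    have := (h1.exp).fun_neg
    refine this.congr_deriv ?_
    ring
  have htends : Tendsto (fun y : ℝ => -Real.exp (-(2:ℝ)⁻¹ * y ^ 2)) atTop (nhds 0) := by
    rw [show (0:ℝ) = -0 by ring]
    refine Tendsto.neg ?_
    refine Real.tendsto_exp_atBot.comp ?_
    have : Tendsto (fun y : ℝ => y ^ 2) atTop atTop := tendsto_pow_atTop (by norm_num)
    exact Tendsto.const_mul_atTop_of_neg (by norm_num) this
  have hint : IntegrableOn (fun x : ℝ => x * Real.exp (-(2:ℝ)⁻¹ * x ^ 2)) (Ici 0) :=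
    (integrable_mul_exp_neg_mul_sq (by norm_num : (0:ℝ) < 2⁻¹)).integrableOn
  have := integral_Ioi_of_hasDerivAt_of_tendsto' hderiv (hint.mono_set Ioi_subset_Ici_self) htends
  simp at this
  simpa using this

lemma gaussAux_withDensity :
    gaussianReal 0 1 = volume.withDensity
      (fun x => ((gaussianPDFReal 0 1 x).toNNReal : ℝ≥0∞)) := by
  rw [gaussianReal_of_var_ne_zero 0 one_ne_zero]
  rfl

lemma gaussAux_integral (g : ℝ → ℝ) :
    ∫ x, g x ∂(gaussianReal 0 1) = ∫ x, gaussianPDFReal 0 1 x * g x := by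
  rw [gaussAux_withDensity, integral_withDensity_eq_integral_smul
    (measurable_gaussianPDFReal 0 1).real_toNNReal]
  congr 1
  ext x
  rw [NNReal.smul_def, Real.coe_toNNReal _ (gaussianPDFReal_nonneg 0 1 x), smul_eq_mul]

lemma gaussAux_integrable_abs : Integrable (fun x : ℝ => |x|) (gaussianReal 0 1) := by
  rw [gaussAux_withDensity, integrable_withDensity_iff_integrable_smul
    (measurable_gaussianPDFReal 0 1).real_toNNReal]
  have : Integrable (fun x : ℝ => (Real.sqrt (2 * Real.pi))⁻¹ *
      (|x| * Real.exp (-(2:ℝ)⁻¹ * x ^ 2))) volume := by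
    refine Integrable.const_mul ?_ _
    have h := (integrable_mul_exp_neg_mul_sq (by norm_num : (0:ℝ) < 2⁻¹)).abs
    refine h.congr (ae_of_all _ fun x => ?_)
    show |x * Real.exp (-(2:ℝ)⁻¹ * x ^ 2)| = |x| * Real.exp (-(2:ℝ)⁻¹ * x ^ 2)
    rw [abs_mul, abs_of_nonneg (Real.exp_pos _).le]
  refine this.congr (ae_of_all _ fun x => ?_)
  show (Real.sqrt (2 * Real.pi))⁻¹ * (|x| * Real.exp (-(2:ℝ)⁻¹ * x ^ 2))
    = (gaussianPDFReal 0 1 x).toNNReal • |x|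
  rw [NNReal.smul_def, Real.coe_toNNReal _ (gaussianPDFReal_nonneg 0 1 x), smul_eq_mul,
    gaussAux_pdf]
  ring

lemma gaussAux_abs_integral :
    ∫ x, |x| ∂(gaussianReal 0 1) = Real.sqrt (2 / Real.pi) := by
  rw [gaussAux_integral]
  have h1 : ∀ x : ℝ, gaussianPDFReal 0 1 x * |x| =
      (fun t => (Real.sqrt (2 * Real.pi))⁻¹ * (t * Real.exp (-(2:ℝ)⁻¹ * t ^ 2))) |x| := by
    intro x
    simp only [gaussAux_pdf, sq_abs]
    ring
  have h2 : (∫ x, gaussianPDFReal 0 1 x * |x|) =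
      2 * ∫ x in Ioi (0:ℝ), (Real.sqrt (2 * Real.pi))⁻¹ * (x * Real.exp (-(2:ℝ)⁻¹ * x ^ 2)) := by
    rw [← integral_comp_abs (f := fun t => (Real.sqrt (2 * Real.pi))⁻¹ *
      (t * Real.exp (-(2:ℝ)⁻¹ * t ^ 2)))]
    exact integral_congr_ae (ae_of_all _ h1)
  rw [h2, MeasureTheory.integral_const_mul, gaussAux_Ioi, mul_one]
  rw [show (2 : ℝ) / Real.pi = 4 / (2 * Real.pi) by ring,
    Real.sqrt_div (by norm_num : (0:ℝ) ≤ 4),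
    show Real.sqrt 4 = 2 by rw [show (4:ℝ) = 2^2 by norm_num, Real.sqrt_sq (by norm_num)]]
  rw [div_eq_mul_inv]


/-- For nonnegative random variables `U`, `V`, `σ > 0` and a standard normal `ζ`
independent of each of them: if `d` bounds the Wasserstein distance between the laws
of `√U` and `√V` (i.e. `|E h(√U) - E h(√V)| ≤ d` for every 1-Lipschitz `h`),
then the Wasserstein distance between the laws of `σ√U ζ` and `σ√V ζ` is at most
`σ √(2/π) d`. -/
theorem stmt_10 {Ω : Type*} [MeasureSpace Ω] [IsProbabilityMeasure (ℙ : Measure Ω)]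
    (U V ζ : Ω → ℝ) (hUmeas : Measurable U) (hVmeas : Measurable V)
    (hζmeas : Measurable ζ)
    (hU : ∀ ω, 0 ≤ U ω) (hV : ∀ ω, 0 ≤ V ω)
    (hζ : Measure.map ζ ℙ = gaussianReal 0 1)
    (hζU : IndepFun ζ U ℙ) (hζV : IndepFun ζ V ℙ)
    (hUint : Integrable (fun ω => Real.sqrt (U ω)) ℙ)
    (hVint : Integrable (fun ω => Real.sqrt (V ω)) ℙ)
    (σ : ℝ) (hσ : 0 < σ)
    (d : ℝ)
    (hd : ∀ g : ℝ → ℝ, LipschitzWith 1 g →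
      |(∫ ω, g (Real.sqrt (U ω)) ∂ℙ) - ∫ ω, g (Real.sqrt (V ω)) ∂ℙ| ≤ d) :
    ∀ h : ℝ → ℝ, LipschitzWith 1 h →
      |(∫ ω, h (σ * Real.sqrt (U ω) * ζ ω) ∂ℙ) -
          ∫ ω, h (σ * Real.sqrt (V ω) * ζ ω) ∂ℙ| ≤
        σ * Real.sqrt (2 / Real.pi) * d := by
  intro h hlip
  set γ := gaussianReal 0 1 with hγdef
  have hlip' : ∀ a b : ℝ, |h a - h b| ≤ |a - b| := fun a b => by
    simpa [Real.dist_eq] using hlip.dist_le_mul a b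
  have habs : ∀ x : ℝ, |h x| ≤ |h 0| + |x| := fun x => by
    calc |h x| = |h 0 + (h x - h 0)| := by ring_nf
    _ ≤ |h 0| + |h x - h 0| := abs_add_le _ _
    _ ≤ |h 0| + |x| := by have := hlip' x 0; simp at this; linarith
  set G : ℝ → ℝ := fun u => ∫ z, h (σ * u * z) ∂γ with hGdef
  have hGint : ∀ u : ℝ, Integrable (fun z => h (σ * u * z)) γ := by
    intro u
    have hb : Integrable (fun z : ℝ => |h 0| + |σ * u| * |z|) γ :=
      (integrable_const _).add (gaussAux_integrable_abs.const_mul _)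
    refine hb.mono' ?_ (ae_of_all _ fun z => ?_)
    · exact (hlip.continuous.comp (continuous_const.mul continuous_id)).aestronglyMeasurable
    · have := habs (σ * u * z)
      calc ‖h (σ * u * z)‖ = |h (σ * u * z)| := rfl
      _ ≤ |h 0| + |σ * u * z| := this
      _ = |h 0| + |σ * u| * |z| := by rw [abs_mul]
  set c : ℝ := σ * Real.sqrt (2 / Real.pi) with hcdef
  have hc : 0 < c := mul_pos hσ (Real.sqrt_pos.mpr (div_pos two_pos Real.pi_pos))
  have hGlip : ∀ u v : ℝ, |G u - G v| ≤ c * |u - v| := by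
    intro u v
    have hsub : G u - G v = ∫ z, (h (σ * u * z) - h (σ * v * z)) ∂γ :=
      (integral_sub (hGint u) (hGint v)).symm
    rw [hsub]
    calc |∫ z, (h (σ * u * z) - h (σ * v * z)) ∂γ|
        ≤ ∫ z, |h (σ * u * z) - h (σ * v * z)| ∂γ :=
          by simpa [Real.norm_eq_abs] using
            norm_integral_le_integral_norm (μ := γ) fun z => h (σ * u * z) - h (σ * v * z)
    _ ≤ ∫ z, σ * |u - v| * |z| ∂γ := by
        refine integral_mono ((hGint u).sub (hGint v)).abs
          (gaussAux_integrable_abs.const_mul _) fun z => ?_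
        calc |h (σ * u * z) - h (σ * v * z)| ≤ |σ * u * z - σ * v * z| := hlip' _ _
        _ = σ * |u - v| * |z| := by
            rw [show σ * u * z - σ * v * z = σ * ((u - v) * z) by ring, abs_mul,
              abs_of_pos hσ, abs_mul]
            ring
    _ = σ * |u - v| * Real.sqrt (2 / Real.pi) := by
        rw [MeasureTheory.integral_const_mul, gaussAux_abs_integral]
    _ = c * |u - v| := by rw [hcdef]; ring
  have hGcont : Continuous G := by
    refine (LipschitzWith.of_dist_le_mul (K := c.toNNReal) fun a b => ?_).continuous
    rw [Real.dist_eq, Real.dist_eq, Real.coe_toNNReal _ hc.le]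
    exact hGlip a b
  -- key identity
  have key : ∀ W : Ω → ℝ, Measurable W → IndepFun ζ W ℙ →
      Integrable (fun ω => Real.sqrt (W ω)) ℙ →
      ∫ ω, h (σ * Real.sqrt (W ω) * ζ ω) ∂ℙ = ∫ ω, G (Real.sqrt (W ω)) ∂ℙ := by
    intro W hWmeas hind hWint
    have : IsProbabilityMeasure (Measure.map W ℙ) :=
      Measure.isProbabilityMeasure_map hWmeas.aemeasurable
    have hmap : Measure.map (fun ω => (ζ ω, W ω)) ℙ = γ.prod (Measure.map W ℙ) := by
      have h2 := (indepFun_iff_map_prod_eq_prod_map_map hζmeas.aemeasurable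
        hWmeas.aemeasurable).mp hind
      rw [hζ] at h2
      exact h2
    set φ : ℝ × ℝ → ℝ := fun p => h (σ * Real.sqrt p.2 * p.1) with hφdef
    have hφcont : Continuous φ :=
      hlip.continuous.comp (((continuous_const.mul
        (Real.continuous_sqrt.comp continuous_snd)).mul continuous_fst))
    have hφint : Integrable φ (γ.prod (Measure.map W ℙ)) := by
      have hsqint : Integrable (fun u : ℝ => Real.sqrt u) (Measure.map W ℙ) := by
        rw [integrable_map_measure Real.continuous_sqrt.aestronglyMeasurable
          hWmeas.aemeasurable]
        exact hWint
      have hb : Integrable (fun p : ℝ × ℝ => |h 0| + σ * (|p.1| * Real.sqrt p.2))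
          (γ.prod (Measure.map W ℙ)) := by
        refine (integrable_const _).add (Integrable.const_mul ?_ _)
        exact Integrable.mul_prod gaussAux_integrable_abs hsqint
      refine hb.mono' hφcont.aestronglyMeasurable (ae_of_all _ fun p => ?_)
      calc ‖φ p‖ = |h (σ * Real.sqrt p.2 * p.1)| := rfl
      _ ≤ |h 0| + |σ * Real.sqrt p.2 * p.1| := habs _
      _ = |h 0| + σ * (|p.1| * Real.sqrt p.2) := by
          rw [abs_mul, abs_mul, abs_of_pos hσ,
            abs_of_nonneg (Real.sqrt_nonneg _)]
          ring
    calc ∫ ω, h (σ * Real.sqrt (W ω) * ζ ω) ∂ℙ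
        = ∫ ω, φ (ζ ω, W ω) ∂ℙ := rfl
    _ = ∫ p, φ p ∂(Measure.map (fun ω => (ζ ω, W ω)) ℙ) :=
        (integral_map (hζmeas.prodMk hWmeas).aemeasurable
          hφcont.aestronglyMeasurable).symm
    _ = ∫ p, φ p ∂(γ.prod (Measure.map W ℙ)) := by rw [hmap]
    _ = ∫ u, ∫ z, φ (z, u) ∂γ ∂(Measure.map W ℙ) := integral_prod_symm φ hφint
    _ = ∫ u, G (Real.sqrt u) ∂(Measure.map W ℙ) := rfl
    _ = ∫ ω, G (Real.sqrt (W ω)) ∂ℙ :=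
        integral_map hWmeas.aemeasurable
          (hGcont.comp Real.continuous_sqrt).aestronglyMeasurable
  rw [key U hUmeas hζU hUint, key V hVmeas hζV hVint]
  set g : ℝ → ℝ := fun u => c⁻¹ * G u with hgdef
  have hglip : LipschitzWith 1 g := by
    refine LipschitzWith.of_dist_le_mul fun a b => ?_
    rw [Real.dist_eq, Real.dist_eq, hgdef]
    simp only
    rw [← mul_sub, abs_mul, abs_of_pos (inv_pos.mpr hc)]
    calc c⁻¹ * |G a - G b| ≤ c⁻¹ * (c * |a - b|) := by
          exact mul_le_mul_of_nonneg_left (hGlip a b) (inv_pos.mpr hc).le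
    _ = 1 * |a - b| := by field_simp
  have hgd := hd g hglip
  have hgu : (∫ ω, g (Real.sqrt (U ω)) ∂ℙ) = c⁻¹ * ∫ ω, G (Real.sqrt (U ω)) ∂ℙ :=
    MeasureTheory.integral_const_mul _ _
  have hgv : (∫ ω, g (Real.sqrt (V ω)) ∂ℙ) = c⁻¹ * ∫ ω, G (Real.sqrt (V ω)) ∂ℙ :=
    MeasureTheory.integral_const_mul _ _
  rw [hgu, hgv] at hgd
  have habs2 : |(∫ ω, G (Real.sqrt (U ω)) ∂ℙ) - ∫ ω, G (Real.sqrt (V ω)) ∂ℙ|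
      = c * |c⁻¹ * (∫ ω, G (Real.sqrt (U ω)) ∂ℙ) - c⁻¹ * ∫ ω, G (Real.sqrt (V ω)) ∂ℙ| := by
    rw [← mul_sub, abs_mul, abs_of_pos (inv_pos.mpr hc), ← mul_assoc,
      mul_inv_cancel₀ hc.ne', one_mul]
  rw [show σ * Real.sqrt (2 / Real.pi) * d = c * d from rfl, habs2]
  exact mul_le_mul_of_nonneg_left hgd hc.le
end

section
/- For p ∈ (0,1], the function f(p) = ∑_{k=1}^∞ k^{-1/2}(1-p)^k satisfies f(p) ≤ 2(1/√p - 1). -/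
open Polynomial Finset

lemma desc_half (k : ℕ) :
    (-1:ℚ)^k * (descPochhammer ℤ k).smeval (-(1:ℚ)/2) =
      (Nat.centralBinom k) * (Nat.factorial k) / 4^k := by
  induction k with
  | zero => simp [smeval_one]
  | succ k ih =>
    rw [descPochhammer_succ_right, smeval_mul, smeval_sub, smeval_X, smeval_natCast]
    simp only [pow_one, pow_zero, nsmul_eq_mul, mul_one]
    have h' : ((k:ℚ) + 1) * (Nat.centralBinom (k+1)) = 2 * (2*k+1) * Nat.centralBinom k := by
      exact_mod_cast congrArg (Nat.cast : ℕ → ℚ) (Nat.succ_mul_centralBinom_succ k)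
    have e1 : (-1:ℚ)^(k+1) * ((descPochhammer ℤ k).smeval (-(1:ℚ)/2) *
        (-(1:ℚ)/2 - (k:ℚ))) =
        ((-1:ℚ)^k * (descPochhammer ℤ k).smeval (-(1:ℚ)/2)) * ((1:ℚ)/2 + k) := by
      ring
    rw [e1, ih]
    have hf : (Nat.factorial (k+1) : ℚ) = (k+1) * Nat.factorial k := by
      push_cast [Nat.factorial_succ]; ring
    have h4 : (4:ℚ)^k ≠ 0 := by positivity
    rw [hf, pow_succ]
    field_simp
    linear_combination (-2) * h'

lemma desc_negone (k : ℕ) :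
    (descPochhammer ℤ k).smeval (-1:ℚ) = (-1)^k * (Nat.factorial k) := by
  induction k with
  | zero => simp [smeval_one]
  | succ k ih =>
    rw [descPochhammer_succ_right, smeval_mul, smeval_sub, smeval_X, smeval_natCast, ih]
    simp only [pow_one, pow_zero, nsmul_eq_mul, mul_one]
    have hf : (Nat.factorial (k+1) : ℚ) = (k+1) * Nat.factorial k := by
      push_cast [Nat.factorial_succ]; ring
    rw [hf]; ring

lemma choose_half' (k : ℕ) :
    (-1:ℚ)^k * Ring.choose (-(1:ℚ)/2) k = (Nat.centralBinom k) / 4^k := by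
  have hk : (Nat.factorial k : ℚ) ≠ 0 := by exact_mod_cast Nat.factorial_ne_zero k
  apply mul_left_cancel₀ hk
  have h := Ring.descPochhammer_eq_factorial_smul_choose (-(1:ℚ)/2) k
  rw [nsmul_eq_mul] at h
  have h2 := desc_half k
  linear_combination h2 - ((-1:ℚ)^k) * h

lemma choose_negone (k : ℕ) : Ring.choose (-1:ℚ) k = (-1)^k := by
  have hk : (Nat.factorial k : ℚ) ≠ 0 := by exact_mod_cast Nat.factorial_ne_zero k
  apply mul_left_cancel₀ hk
  have h := Ring.descPochhammer_eq_factorial_smul_choose (-1:ℚ) k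
  rw [nsmul_eq_mul] at h
  linear_combination (desc_negone k) - h

lemma neg_one_sq_pow (k : ℕ) : ((-1:ℚ)^k) * ((-1:ℚ)^k) = 1 := by
  rw [← pow_add]
  exact Even.neg_one_pow ⟨k, rfl⟩

lemma conv_q (k : ℕ) :
    ∑ ij ∈ Finset.HasAntidiagonal.antidiagonal k,
      ((Nat.centralBinom ij.1 : ℚ)/4^ij.1) * ((Nat.centralBinom ij.2 : ℚ)/4^ij.2) = 1 := by
  have hv := Ring.add_choose_eq (r := -(1:ℚ)/2) (s := -(1:ℚ)/2) k (Commute.all _ _)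
  rw [show (-(1:ℚ)/2) + (-(1:ℚ)/2) = -1 by norm_num, choose_negone] at hv
  have step : ∀ ij ∈ Finset.HasAntidiagonal.antidiagonal k,
      ((Nat.centralBinom ij.1 : ℚ)/4^ij.1) * ((Nat.centralBinom ij.2 : ℚ)/4^ij.2)
      = (-1:ℚ)^k * (Ring.choose (-(1:ℚ)/2) ij.1 * Ring.choose (-(1:ℚ)/2) ij.2) := by
    intro ij hij
    rw [← choose_half' ij.1, ← choose_half' ij.2,
      ← Finset.HasAntidiagonal.mem_antidiagonal.mp hij, pow_add]
    ring
  rw [Finset.sum_congr rfl step, ← Finset.mul_sum, ← hv]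
  exact neg_one_sq_pow k

lemma conv_r (k : ℕ) :
    ∑ ij ∈ Finset.HasAntidiagonal.antidiagonal k,
      ((Nat.centralBinom ij.1 : ℝ)/4^ij.1) * ((Nat.centralBinom ij.2 : ℝ)/4^ij.2) = 1 := by
  have h := congrArg (fun x : ℚ => (x : ℝ)) (conv_q k)
  push_cast at h
  exact h

noncomputable def cc (k : ℕ) : ℝ := (Nat.centralBinom k) / 4^k

lemma cc_pos (k : ℕ) : 0 < cc k := by
  unfold cc
  have := Nat.centralBinom_pos k
  positivity

lemma cc_succ (k : ℕ) : cc (k+1) = cc k * ((2*k+1)/(2*k+2)) := by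
  unfold cc
  have h' : ((k:ℝ) + 1) * (Nat.centralBinom (k+1)) = 2 * (2*k+1) * Nat.centralBinom k := by
    exact_mod_cast congrArg (Nat.cast : ℕ → ℝ) (Nat.succ_mul_centralBinom_succ k)
  have h4 : (4:ℝ)^k ≠ 0 := by positivity
  have hk1 : (k:ℝ) + 1 ≠ 0 := by positivity
  rw [pow_succ]
  field_simp
  linear_combination 2 * h'

lemma cc_le_one (k : ℕ) : cc k ≤ 1 := by
  induction k with
  | zero => simp [cc]
  | succ k ih =>
    rw [cc_succ]
    have h1 : ((2*(k:ℝ)+1)/(2*k+2)) ≤ 1 := by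
      rw [div_le_one (by positivity)]
      linarith
    calc cc k * ((2*(k:ℝ)+1)/(2*k+2)) ≤ 1 * 1 :=
          mul_le_mul ih h1 (by positivity) zero_le_one
      _ = 1 := one_mul 1

lemma sqrt_le_cc (k : ℕ) : 1 / Real.sqrt ((k:ℝ) + 1) ≤ 2 * cc (k+1) := by
  induction k with
  | zero => norm_num [cc, Nat.centralBinom]
  | succ k ih =>
    rw [cc_succ (k+1)]
    have hs1 : (0:ℝ) < Real.sqrt ((k:ℝ)+1) := Real.sqrt_pos.mpr (by positivity)
    have hs2 : (0:ℝ) < Real.sqrt ((k:ℝ)+2) := Real.sqrt_pos.mpr (by positivity)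
    have key : (2*(k:ℝ)+4) * Real.sqrt ((k:ℝ)+1) ≤ (2*(k:ℝ)+3) * Real.sqrt ((k:ℝ)+2) := by
      have e1 : (2*(k:ℝ)+4) * Real.sqrt ((k:ℝ)+1)
          = Real.sqrt ((2*(k:ℝ)+4)^2 * ((k:ℝ)+1)) := by
        rw [Real.sqrt_mul (by positivity), Real.sqrt_sq (by positivity)]
      have e2 : (2*(k:ℝ)+3) * Real.sqrt ((k:ℝ)+2)
          = Real.sqrt ((2*(k:ℝ)+3)^2 * ((k:ℝ)+2)) := by
        rw [Real.sqrt_mul (by positivity), Real.sqrt_sq (by positivity)]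
      rw [e1, e2]
      apply Real.sqrt_le_sqrt
      nlinarith [sq_nonneg ((k:ℝ))]
    have step : 1 / Real.sqrt ((k:ℝ)+2) ≤ (1 / Real.sqrt ((k:ℝ)+1)) * ((2*(k:ℝ)+3)/(2*(k:ℝ)+4)) := by
      rw [div_mul_div_comm, one_mul, div_le_div_iff₀ hs2 (by positivity)]
      linarith [key]
    have hcast : ((k:ℝ)+1+1) = ((k:ℝ)+2) := by ring
    push_cast
    rw [hcast]
    push_cast at ih
    calc 1 / Real.sqrt ((k:ℝ)+2) ≤ (1 / Real.sqrt ((k:ℝ)+1)) * ((2*(k:ℝ)+3)/(2*(k:ℝ)+4)) := step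
      _ ≤ (2 * cc (k+1)) * ((2*(k:ℝ)+3)/(2*(k:ℝ)+4)) := by
          apply mul_le_mul_of_nonneg_right ih (by positivity)
      _ = 2 * (cc (k+1) * ((2*((k:ℝ)+1)+1)/(2*((k:ℝ)+1)+2))) := by ring

lemma S_eq (q : ℝ) (hq0 : 0 ≤ q) (hq1 : q < 1) :
    ∑' k : ℕ, cc k * q ^ k = 1 / Real.sqrt (1 - q) := by
  set f : ℕ → ℝ := fun k => cc k * q ^ k with hf
  have hterm : ∀ k, 0 ≤ f k := fun k =>
    mul_nonneg (cc_pos k).le (pow_nonneg hq0 k)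
  have hle : ∀ k, f k ≤ q ^ k := fun k => by
    have := mul_le_of_le_one_left (pow_nonneg hq0 k) (cc_le_one k)
    simpa [hf] using mul_le_mul_of_nonneg_right (cc_le_one k) (pow_nonneg hq0 k) |>.trans_eq (one_mul _)
  have hsum : Summable f :=
    Summable.of_nonneg_of_le hterm hle (summable_geometric_of_lt_one hq0 hq1)
  have hnorm : Summable fun k => ‖f k‖ := by
    simpa [Real.norm_of_nonneg (hterm _)] using hsum
  set S := ∑' k, f k with hS
  have hS0 : 0 ≤ S := tsum_nonneg hterm
  have hsq : S * S = (1 - q)⁻¹ := by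
    rw [hS, tsum_mul_tsum_eq_tsum_sum_antidiagonal_of_summable_norm hnorm hnorm]
    have hinner : ∀ n : ℕ, ∑ kl ∈ Finset.HasAntidiagonal.antidiagonal n, f kl.1 * f kl.2 = q ^ n := by
      intro n
      have : ∀ kl ∈ Finset.HasAntidiagonal.antidiagonal n, f kl.1 * f kl.2
          = (((Nat.centralBinom kl.1 : ℝ)/4^kl.1) * ((Nat.centralBinom kl.2 : ℝ)/4^kl.2)) * q^n := by
        intro kl hkl
        rw [← Finset.HasAntidiagonal.mem_antidiagonal.mp hkl, pow_add]
        simp only [hf, cc]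
        ring
      rw [Finset.sum_congr rfl this, ← Finset.sum_mul, conv_r, one_mul]
    rw [tsum_congr hinner, tsum_geometric_of_lt_one hq0 hq1]
  have h1q : 0 < 1 - q := by linarith
  have : S = Real.sqrt ((1 - q)⁻¹) := by
    rw [← hsq, Real.sqrt_mul_self hS0]
  rw [this, Real.sqrt_inv, one_div]

lemma S_summable (q : ℝ) (hq0 : 0 ≤ q) (hq1 : q < 1) :
    Summable (fun k : ℕ => cc k * q ^ k) := by
  apply Summable.of_nonneg_of_le
    (fun k => mul_nonneg (cc_pos k).le (pow_nonneg hq0 k))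
    (fun k => (mul_le_mul_of_nonneg_right (cc_le_one k) (pow_nonneg hq0 k)).trans_eq (one_mul _))
    (summable_geometric_of_lt_one hq0 hq1)

set_option maxHeartbeats 1000000 in
/-- For `p ∈ (0,1]`, the series `f(p) = ∑_{k=1}^∞ (1-p)^k / √k` satisfies
`f(p) ≤ 2 (1/√p - 1)`. -/
theorem stmt_19 (p : ℝ) (hp : 0 < p) (hp1 : p ≤ 1) :
    ∑' k : ℕ, (1 - p) ^ (k + 1) / Real.sqrt (k + 1) ≤ 2 * (1 / Real.sqrt p - 1) := by
  set q : ℝ := 1 - p with hq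
  have hq0 : 0 ≤ q := by simp [hq]; linarith
  have hq1 : q < 1 := by simp [hq]; linarith
  have h1q : 1 - q = p := by rw [hq]; ring
  have hsum : Summable (fun k : ℕ => cc k * q ^ k) := S_summable q hq0 hq1
  have hshift : Summable (fun k : ℕ => cc (k+1) * q ^ (k+1)) :=
    (summable_nat_add_iff 1).mpr hsum
  have hshift2 : Summable (fun k : ℕ => 2 * (cc (k+1) * q ^ (k+1))) := hshift.mul_left 2
  have hterm : ∀ k : ℕ, (1 - p) ^ (k + 1) / Real.sqrt (k + 1)
      ≤ 2 * (cc (k+1) * q ^ (k+1)) := by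
    intro k
    have h1 : (1 - p) ^ (k + 1) / Real.sqrt ((k:ℝ) + 1)
        = q ^ (k+1) * (1 / Real.sqrt ((k:ℝ) + 1)) := by
      rw [hq]; ring
    rw [h1]
    calc q ^ (k+1) * (1 / Real.sqrt ((k:ℝ) + 1))
        ≤ q ^ (k+1) * (2 * cc (k+1)) :=
          mul_le_mul_of_nonneg_left (sqrt_le_cc k) (pow_nonneg hq0 _)
      _ = 2 * (cc (k+1) * q ^ (k+1)) := by ring
  have hLsum : Summable (fun k : ℕ => (1 - p) ^ (k + 1) / Real.sqrt (k + 1)) := by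
    apply Summable.of_nonneg_of_le _ hterm hshift2
    intro k
    apply div_nonneg (pow_nonneg hq0 _) (Real.sqrt_nonneg _)
  have hle := Summable.tsum_le_tsum hterm hLsum hshift2
  have hsplit : ∑' k : ℕ, cc k * q ^ k
      = cc 0 * q ^ 0 + ∑' k : ℕ, cc (k+1) * q ^ (k+1) :=
    Summable.tsum_eq_zero_add hsum
  have hc0 : cc 0 * q ^ 0 = 1 := by simp [cc]
  have hSval : ∑' k : ℕ, cc k * q ^ k = 1 / Real.sqrt p := by
    rw [S_eq q hq0 hq1, h1q]
  have hT : ∑' k : ℕ, cc (k+1) * q ^ (k+1) = 1 / Real.sqrt p - 1 := by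
    rw [← hSval, hsplit, hc0]; ring
  calc ∑' k : ℕ, (1 - p) ^ (k + 1) / Real.sqrt (k + 1)
      ≤ ∑' k : ℕ, 2 * (cc (k+1) * q ^ (k+1)) := hle
    _ = 2 * ∑' k : ℕ, cc (k+1) * q ^ (k+1) := tsum_mul_left
    _ = 2 * (1 / Real.sqrt p - 1) := by rw [hT]
end
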